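/- arXiv:math/0501243 — 10 statements merged into one kernel-verified Lean document; each statement's English description precedes it below -/
import Mathlib

section
/- Let E be a field and L a finite extension of E which is the compositum of two intermediate extensions L₁ and L₂ of E whose degrees [L₁:E] and [L₂:E] are relatively prime. Then the norm group N(L/E) equals the intersection N(L₁/E) ∩ N(L₂/E). -/
open Matrix Algebra Module

section Key

variable {E K : Type*} [Field E] [Field K] [Algebra E K]
variable {ι κ : Type*} [Fintype ι] [DecidableEq ι] [Fintype κ] [DecidableEq κ]

lemma det_comp_mapMatrix (b : Basis κ E K) (M : Matrix ι ι K) :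
    (Matrix.compAlgEquiv ι κ E E ((Algebra.leftMulMatrix b).mapMatrix M)).det
      = Algebra.norm E M.det := by
  refine Matrix.diagonal_transvection_induction
    (fun M => (Matrix.compAlgEquiv ι κ E E ((Algebra.leftMulMatrix b).mapMatrix M)).det
      = Algebra.norm E M.det) M ?_ ?_ ?_
  · intro D _
    have h1 : Matrix.compAlgEquiv ι κ E E ((Algebra.leftMulMatrix b).mapMatrix (diagonal D))
        = (blockDiagonal fun i => Algebra.leftMulMatrix b (D i)).submatrix
            (Equiv.prodComm ι κ) (Equiv.prodComm ι κ) := by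
      ext ⟨i, k⟩ ⟨j, k'⟩
      simp only [Matrix.compAlgEquiv_apply, AlgHom.mapMatrix_apply, Matrix.map_apply,
        Matrix.comp_apply, Matrix.submatrix_apply, Equiv.prodComm_apply, Prod.swap_prod_mk,
        Matrix.blockDiagonal_apply, Matrix.diagonal_apply]
      split_ifs with h
      · rfl
      · simp
    rw [h1, Matrix.det_submatrix_equiv_self, Matrix.det_blockDiagonal, Matrix.det_diagonal,
      map_prod]
    exact Finset.prod_congr rfl fun i _ => (Algebra.norm_eq_matrix_det b (D i)).symm
  · rintro ⟨i, j, hij, c⟩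
    rw [Matrix.TransvectionStruct.det, _root_.map_one]
    show (Matrix.compAlgEquiv ι κ E E
      ((Algebra.leftMulMatrix b).mapMatrix (Matrix.transvection i j c))).det = 1
    rw [Matrix.transvection, map_add, map_add, _root_.map_one, _root_.map_one]
    set N := Matrix.compAlgEquiv ι κ E E
      ((Algebra.leftMulMatrix b).mapMatrix (Matrix.single i j c)) with hNdef
    set U : Matrix (ι × κ) κ E :=
      Matrix.of (fun p k => if p.1 = i then Algebra.leftMulMatrix b c p.2 k else 0) with hU
    set V : Matrix κ (ι × κ) E :=
      Matrix.of (fun k q => if q.1 = j then (1 : Matrix κ κ E) k q.2 else 0) with hV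
    have hN : N = U * V := by
      ext ⟨p1, p2⟩ ⟨q1, q2⟩
      simp only [hNdef, Matrix.compAlgEquiv_apply, AlgHom.mapMatrix_apply, Matrix.map_apply,
        Matrix.comp_apply, Matrix.mul_apply, hU, hV, Matrix.of_apply, Matrix.single]
      rcases eq_or_ne p1 i with h1 | h1
      · rcases eq_or_ne q1 j with h2 | h2
        · subst h1; subst h2
          simp [Matrix.single, Matrix.one_apply, mul_ite]
        · subst h1
          have h2' : ¬ j = q1 := fun h => h2 h.symm
          simp [Matrix.single, h2, h2']
      · have h1' : ¬ i = p1 := fun h => h1 h.symm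
        simp [Matrix.single, h1, h1']
    have hVU : V * U = 0 := by
      ext k k'
      simp only [Matrix.mul_apply, hU, hV, Matrix.of_apply, Matrix.zero_apply]
      refine Finset.sum_eq_zero fun q _ => ?_
      rcases eq_or_ne q.1 j with h | h
      · simp [h, hij.symm]
      · simp [h]
    rw [hN, Matrix.det_one_add_mul_comm, hVU, add_zero, Matrix.det_one]
  · intro A B hA hB
    rw [_root_.map_mul, _root_.map_mul, Matrix.det_mul, Matrix.det_mul, _root_.map_mul, hA, hB]

lemma norm_tower {E K L : Type*} [Field E] [Field K] [Field L] [Algebra E K] [Algebra K L]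
    [Algebra E L] [IsScalarTower E K L] [FiniteDimensional E L] (x : L) :
    Algebra.norm E (Algebra.norm K x) = Algebra.norm E x := by
  have _ : FiniteDimensional E K := FiniteDimensional.left E K L
  have _ : FiniteDimensional K L := FiniteDimensional.right E K L
  let b := Module.finBasis E K
  let c := Module.finBasis K L
  rw [Algebra.norm_eq_matrix_det c, ← det_comp_mapMatrix b,
    Algebra.norm_eq_matrix_det (b.smulTower c)]
  have h2 : Algebra.leftMulMatrix (b.smulTower c) x =
      (Matrix.compAlgEquiv _ _ E E
        ((Algebra.leftMulMatrix b).mapMatrix (Algebra.leftMulMatrix c x))).submatrix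
        (Equiv.prodComm _ _) (Equiv.prodComm _ _) := by
    ext ⟨i, k⟩ ⟨j, k'⟩
    simp [Algebra.smulTower_leftMulMatrix]
  rw [h2, Matrix.det_submatrix_equiv_self]

lemma norm_algebraMap_tower {E K L : Type*} [Field E] [Field K] [Field L] [Algebra E K]
    [Algebra K L] [Algebra E L] [IsScalarTower E K L] [FiniteDimensional E L] (a : K) :
    Algebra.norm E (algebraMap K L a) = Algebra.norm E a ^ Module.finrank K L := by
  have _ : FiniteDimensional K L := FiniteDimensional.right E K L
  rw [← norm_tower (E := E) (K := K), Algebra.norm_algebraMap, map_pow]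

end Key

/-- The norm group `N(L/E)`: the image of the norm map `L* → E*`, as a subgroup of `Eˣ`. -/
noncomputable def normGroup (E L : Type*) [Field E] [Field L] [Algebra E L] : Subgroup Eˣ :=
  (Units.map (Algebra.norm E : L →* E)).range

theorem stmt_0 {E L : Type*} [Field E] [Field L] [Algebra E L] [FiniteDimensional E L]
    (L₁ L₂ : IntermediateField E L) (hcomp : L₁ ⊔ L₂ = ⊤)
    (hcop : Nat.Coprime (Module.finrank E L₁) (Module.finrank E L₂)) :
    normGroup E L = normGroup E L₁ ⊓ normGroup E L₂ := by
  have hle : ∀ K : IntermediateField E L, normGroup E L ≤ normGroup E K := by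
    intro K x hx
    obtain ⟨y, rfl⟩ := hx
    refine ⟨Units.map (Algebra.norm K : L →* K) y, ?_⟩
    ext
    simpa [Units.coe_map] using norm_tower (E := E) (K := K) (y : L)
  refine le_antisymm (le_inf (hle L₁) (hle L₂)) ?_
  rintro x ⟨⟨a, ha⟩, ⟨c, hc⟩⟩
  -- degrees
  have hfd1 : FiniteDimensional E L₁ := FiniteDimensional.left E L₁ L
  have hfd2 : FiniteDimensional E L₂ := FiniteDimensional.left E L₂ L
  set n₁ := Module.finrank E L₁
  set n₂ := Module.finrank E L₂
  have hN1 : n₁ * Module.finrank L₁ L = Module.finrank E L :=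
    Module.finrank_mul_finrank E L₁ L
  have hN2 : n₂ * Module.finrank L₂ L = Module.finrank E L :=
    Module.finrank_mul_finrank E L₂ L
  have hNle : Module.finrank E L ≤ n₁ * n₂ := by
    have := IntermediateField.finrank_sup_le L₁ L₂
    rwa [hcomp, IntermediateField.finrank_top'] at this
  have hNdvd : n₁ * n₂ ∣ Module.finrank E L :=
    Nat.Coprime.mul_dvd_of_dvd_of_dvd hcop ⟨_, hN1.symm⟩ ⟨_, hN2.symm⟩
  have hNpos : 0 < Module.finrank E L := Module.finrank_pos
  have hN : Module.finrank E L = n₁ * n₂ :=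
    le_antisymm hNle (Nat.le_of_dvd hNpos hNdvd)
  have hn₁pos : 0 < n₁ := Module.finrank_pos
  have hn₂pos : 0 < n₂ := Module.finrank_pos
  have hd1 : Module.finrank L₁ L = n₂ := by
    have := hN1
    rw [hN] at this
    exact Nat.eq_of_mul_eq_mul_left hn₁pos this
  have hd2 : Module.finrank L₂ L = n₁ := by
    have := hN2
    rw [hN] at this
    exact Nat.eq_of_mul_eq_mul_left hn₂pos (this.trans (mul_comm n₁ n₂))
  -- x ^ n₂ and x ^ n₁ lie in normGroup E L
  have hx2 : x ^ n₂ ∈ normGroup E L := by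
    refine ⟨Units.map (algebraMap L₁ L : L₁ →* L) a, ?_⟩
    ext
    have := norm_algebraMap_tower (E := E) (K := L₁) (L := L) (a : L₁)
    rw [hd1] at this
    have ha' : Algebra.norm E (a : L₁) = (x : E) := congrArg Units.val ha
    simp only [Units.coe_map, MonoidHom.coe_coe, Units.val_pow_eq_pow_val]
    rw [this, ha']
  have hx1 : x ^ n₁ ∈ normGroup E L := by
    refine ⟨Units.map (algebraMap L₂ L : L₂ →* L) c, ?_⟩
    ext
    have := norm_algebraMap_tower (E := E) (K := L₂) (L := L) (c : L₂)
    rw [hd2] at this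
    have hc' : Algebra.norm E (c : L₂) = (x : E) := congrArg Units.val hc
    simp only [Units.coe_map, MonoidHom.coe_coe, Units.val_pow_eq_pow_val]
    rw [this, hc']
  -- Bezout
  obtain ⟨u, v, huv⟩ : ∃ u v : ℤ, u * n₁ + v * n₂ = 1 :=
    Nat.isCoprime_iff_coprime.mpr hcop
  have : x = (x ^ n₁) ^ u * (x ^ n₂) ^ v := by
    rw [← zpow_natCast x n₁, ← zpow_natCast x n₂, ← _root_.zpow_mul, ← _root_.zpow_mul, ← _root_.zpow_add,
      show (n₁ : ℤ) * u + (n₂ : ℤ) * v = 1 by linarith, zpow_one]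
  rw [this]
  exact mul_mem ((normGroup E L).zpow_mem hx1 u) ((normGroup E L).zpow_mem hx2 v)
end

section
/- Let E be a field and L a finite extension of E which is the compositum of intermediate extensions L₁ and L₂ of relatively prime degrees over E. Then N(L₁/E) = E* ∩ N(L/L₂), i.e., an element of E* is a norm from L₁ to E if and only if it is a norm from L to L₂. -/
open Polynomial Matrix

lemma det_one_add_of_isNilpotent {K n : Type*} [Field K] [Fintype n] [DecidableEq n]
    {N : Matrix n n K} (h : IsNilpotent N) : (1 + N).det = 1 := by
  have h' : IsNilpotent (-N) := h.neg
  have hc : (-N).charpoly = X ^ Fintype.card n := by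
    have h2 := Matrix.isNilpotent_charpoly_sub_pow_of_isNilpotent h'
    have h3 := h2.eq_zero
    rwa [sub_eq_zero] at h3
  have h4 := congrArg (Polynomial.eval (1:K)) hc
  rw [Matrix.charpoly, _root_.eval_det, matPolyEquiv_charmatrix] at h4
  simp only [eval_sub, eval_X, eval_C, eval_pow, one_pow] at h4
  rw [sub_neg_eq_add] at h4
  rw [show Matrix.scalar n (1:K) = 1 by simp] at h4
  exact h4

open Module in
lemma det_comp_leftMulMatrix {K M : Type*} [Field K] [Field M] [Algebra K M]
    {ι κ : Type*} [Fintype ι] [DecidableEq ι] [Fintype κ] [DecidableEq κ]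
    (b : Basis ι K M) (A : Matrix κ κ M) :
    ((Matrix.compRingEquiv κ ι K) ((Algebra.leftMulMatrix b).toRingHom.mapMatrix A)).det
      = (Algebra.leftMulMatrix b A.det).det := by
  let Φ : Matrix κ κ M →+* Matrix (κ × ι) (κ × ι) K :=
    (Matrix.compRingEquiv κ ι K).toRingHom.comp ((Algebra.leftMulMatrix b).toRingHom.mapMatrix)
  show (Φ A).det = _
  induction A using Matrix.diagonal_transvection_induction with
  | hdiag D _ =>
      have h1 : Φ (Matrix.diagonal D) =
          (Matrix.blockDiagonal fun k => Algebra.leftMulMatrix b (D k)).submatrix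
            (Equiv.prodComm κ ι) (Equiv.prodComm κ ι) := by
        ext ⟨k, i⟩ ⟨k', j⟩
        simp only [Φ, RingHom.comp_apply, RingEquiv.toRingHom_eq_coe, RingHom.coe_coe,
          RingHom.mapMatrix_apply, Matrix.compRingEquiv_apply, Matrix.comp_apply,
          Matrix.map_apply, Matrix.submatrix_apply, Equiv.prodComm_apply, Prod.swap,
          Matrix.blockDiagonal_apply]
        by_cases hk : k = k'
        · subst hk; simp [Matrix.diagonal_apply_eq]
        · simp [Matrix.diagonal_apply_ne _ hk, hk]
      rw [h1, Matrix.det_submatrix_equiv_self, Matrix.det_blockDiagonal, Matrix.det_diagonal]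
      exact (map_prod (Matrix.detMonoidHom.comp
        (Algebra.leftMulMatrix b).toRingHom.toMonoidHom) D Finset.univ).symm
  | htransvec t =>
      have hE : Matrix.single t.i t.j t.c * Matrix.single t.i t.j t.c = 0 :=
        Matrix.single_mul_single_of_ne (i := t.i) (j := t.j) (k := t.i) (c := t.c) (h := t.hij.symm) (d := t.c)
      have hnil : IsNilpotent (Φ (Matrix.single t.i t.j t.c)) :=
        ⟨2, by rw [pow_two, ← Φ.map_mul, hE, Φ.map_zero]⟩
      rw [show t.toMatrix = Matrix.transvection t.i t.j t.c from rfl,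
        Matrix.det_transvection_of_ne _ _ t.hij _, _root_.map_one (Algebra.leftMulMatrix b),
        Matrix.det_one, Matrix.transvection, Φ.map_add, Φ.map_one,
        det_one_add_of_isNilpotent hnil]
  | hmul A B hA hB =>
      rw [_root_.map_mul, Matrix.det_mul, Matrix.det_mul, hA, hB,
        _root_.map_mul (Algebra.leftMulMatrix b), Matrix.det_mul]

open Module in
/-- Norm transitivity for finite towers of fields (no separability needed). -/
lemma norm_norm_general (K M L : Type*) [Field K] [Field M] [Field L] [Algebra K M] [Algebra M L]
    [Algebra K L] [IsScalarTower K M L] [FiniteDimensional K M] [FiniteDimensional M L] (x : L) :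
    Algebra.norm K (Algebra.norm M x) = Algebra.norm K x := by
  let b := Module.finBasis K M
  let c := Module.finBasis M L
  rw [Algebra.norm_eq_matrix_det b, Algebra.norm_eq_matrix_det c,
    Algebra.norm_eq_matrix_det (b.smulTower c), ← det_comp_leftMulMatrix b]
  have h1 : Algebra.leftMulMatrix (b.smulTower c) x =
      ((Matrix.compRingEquiv _ _ K)
        ((Algebra.leftMulMatrix b).toRingHom.mapMatrix (Algebra.leftMulMatrix c x))).submatrix
        (Equiv.prodComm _ _) (Equiv.prodComm _ _) := by
    ext ⟨i, k⟩ ⟨j, k'⟩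
    rw [Algebra.smulTower_leftMulMatrix]
    rfl
  rw [h1, Matrix.det_submatrix_equiv_self]

open Module IntermediateField in
lemma norm_eq_minpoly_pow (K L : Type*) [Field K] [Field L] [Algebra K L]
    [FiniteDimensional K L] (z : L) :
    Algebra.norm K z =
      ((-1) ^ (minpoly K z).natDegree * (minpoly K z).coeff 0) ^ finrank (K⟮z⟯) L := by
  have hz : IsIntegral K z := IsIntegral.of_finite K z
  have hgen : algebraMap (K⟮z⟯) L (AdjoinSimple.gen K z) = z := AdjoinSimple.algebraMap_gen K z
  have h2 : Algebra.norm (K⟮z⟯) z = (AdjoinSimple.gen K z) ^ finrank (K⟮z⟯) L := by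
    have h2 := Algebra.norm_algebraMap (S := L) (AdjoinSimple.gen K z)
    rwa [hgen] at h2
  rw [← norm_norm_general K (K⟮z⟯) L z, h2, map_pow]
  congr 1
  have h3 := Algebra.PowerBasis.norm_gen_eq_coeff_zero_minpoly (adjoin.powerBasis hz)
  rw [adjoin.powerBasis_gen, minpoly_gen K z] at h3
  rw [h3]
  congr 2

open Module IntermediateField in
lemma finrank_eq_of_compositum {E L : Type*} [Field E] [Field L] [Algebra E L]
    [FiniteDimensional E L] (L₁ L₂ : IntermediateField E L) (hcomp : L₁ ⊔ L₂ = ⊤)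
    (hcop : Nat.Coprime (finrank E L₁) (finrank E L₂)) :
    finrank L₂ L = finrank E L₁ := by
  have hnpos : 0 < finrank E L₂ := finrank_pos
  have hEL : finrank E L = finrank E L₁ * finrank E L₂ := by
    have h1 : finrank E L₁ ∣ finrank E L := ⟨finrank L₁ L, (finrank_mul_finrank E L₁ L).symm⟩
    have h2 : finrank E L₂ ∣ finrank E L := ⟨finrank L₂ L, (finrank_mul_finrank E L₂ L).symm⟩
    have h3 : finrank E L₁ * finrank E L₂ ∣ finrank E L := hcop.mul_dvd_of_dvd_of_dvd h1 h2
    have h4 : finrank E L ≤ finrank E L₁ * finrank E L₂ := by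
      have h5 := IntermediateField.finrank_sup_le (E1 := L₁) (E2 := L₂)
      rwa [hcomp, finrank_top'] at h5
    exact le_antisymm h4 (Nat.le_of_dvd finrank_pos h3)
  have h6 := finrank_mul_finrank E (↥L₂) L
  rw [hEL, Nat.mul_comm (finrank E ↥L₁)] at h6
  exact Nat.eq_of_mul_eq_mul_left hnpos h6

set_option synthInstance.maxHeartbeats 1000000 in
set_option maxHeartbeats 2000000 in
open Module IntermediateField in
lemma norm_compositum {E L : Type*} [Field E] [Field L] [Algebra E L] [FiniteDimensional E L]
    (L₁ L₂ : IntermediateField E L) (hcomp : L₁ ⊔ L₂ = ⊤)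
    (hcop : Nat.Coprime (finrank E L₁) (finrank E L₂)) (y : L₁) :
    Algebra.norm L₂ (algebraMap L₁ L y) = algebraMap E L₂ (Algebra.norm E y) := by
  haveI : FiniteDimensional (↥L₂) L := FiniteDimensional.right E (↥L₂) L
  have hrank : finrank L₂ L = finrank E L₁ := finrank_eq_of_compositum L₁ L₂ hcomp hcop
  set m := finrank E L₁ with hm_def
  set n := finrank E L₂ with hn_def
  set z := algebraMap L₁ L y with hz_def
  have hyint : IsIntegral E y := IsIntegral.of_finite E y
  have hzint : IsIntegral E z := IsIntegral.of_finite E z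
  have hzint₂ : IsIntegral (↥L₂) z := IsIntegral.of_finite (↥L₂) z
  set p := minpoly E y with hp_def
  have hpz : minpoly E z = p := minpoly.algebraMap_eq (algebraMap L₁ L).injective y
  set d := p.natDegree with hd_def
  have hd : 0 < d := minpoly.natDegree_pos hyint
  set q := minpoly (↥L₂) z with hq_def
  have hq_dvd : q ∣ p.map (algebraMap E L₂) := by
    have h := minpoly.dvd_map_of_isScalarTower E (↥L₂) z
    rwa [hpz] at h
  have hpm_monic : (p.map (algebraMap E L₂)).Monic := (minpoly.monic hyint).map _
  -- degree bookkeeping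
  have hdm : d ∣ m := by
    refine ⟨finrank (↥E⟮y⟯) L₁, ?_⟩
    rw [hm_def, hd_def, hp_def, ← adjoin.finrank hyint]
    exact (finrank_mul_finrank E (↥E⟮y⟯) (↥L₁)).symm
  have hcop_dn : Nat.Coprime d n := Nat.Coprime.coprime_dvd_left hdm hcop
  have hle' : E⟮z⟯ ≤ (L₂⟮z⟯).restrictScalars E := by
    rw [adjoin_le_iff]
    rintro w rfl
    exact subset_adjoin (↥L₂) {z} rfl
  have hdvd_d : d ∣ finrank E ((L₂⟮z⟯).restrictScalars E) := by
    have h := IntermediateField.finrank_bot_mul_relfinrank hle'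
    rw [adjoin.finrank hzint, hpz] at h
    exact ⟨_, h.symm⟩
  have hfr : finrank E ((L₂⟮z⟯).restrictScalars E) = n * q.natDegree := by
    rw [← adjoin.finrank hzint₂]
    exact (finrank_mul_finrank E (↥L₂) (↥(L₂⟮z⟯))).symm
  have hd2_pos : 0 < q.natDegree := minpoly.natDegree_pos hzint₂
  have hd_dvd_d2 : d ∣ q.natDegree := by
    rw [hfr] at hdvd_d
    exact (Nat.Coprime.dvd_of_dvd_mul_left hcop_dn hdvd_d)
  have hd2_le : q.natDegree ≤ d := by
    have : d = (p.map (algebraMap E L₂)).natDegree :=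
      (Polynomial.natDegree_map_eq_of_injective (algebraMap E L₂).injective p).symm
    rw [this]
    exact Polynomial.natDegree_le_of_dvd hq_dvd hpm_monic.ne_zero
  have hd2 : q.natDegree = d := Nat.le_antisymm hd2_le (Nat.le_of_dvd hd2_pos hd_dvd_d2)
  have hq_eq : q = p.map (algebraMap E L₂) := by
    refine Polynomial.eq_of_dvd_of_natDegree_le_of_leadingCoeff hq_dvd ?_ ?_
    · rw [hd2, Polynomial.natDegree_map_eq_of_injective (algebraMap E L₂).injective p]
    · rw [(minpoly.monic hzint₂).leadingCoeff, hpm_monic.leadingCoeff]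
  -- exponents
  have he₁ : d * finrank (↥E⟮y⟯) L₁ = m := by
    rw [hm_def, hd_def, hp_def, ← adjoin.finrank hyint]
    exact finrank_mul_finrank E (↥E⟮y⟯) (↥L₁)
  have he₂ : d * finrank (↥(L₂⟮z⟯)) L = m := by
    rw [← hd2, ← adjoin.finrank hzint₂, ← hrank]
    exact finrank_mul_finrank (↥L₂) (↥(L₂⟮z⟯)) L
  have hee : finrank (↥(L₂⟮z⟯)) L = finrank (↥E⟮y⟯) L₁ :=
    Nat.eq_of_mul_eq_mul_left hd (he₂.trans he₁.symm)
  -- norms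
  rw [norm_eq_minpoly_pow (↥L₂) L z, norm_eq_minpoly_pow E (↥L₁) y]
  rw [← hq_def, ← hp_def, hq_eq, hee, ← hd_def]
  rw [Polynomial.natDegree_map_eq_of_injective (algebraMap E L₂).injective p,
    Polynomial.coeff_map, ← hd_def]
  simp only [_root_.map_mul, _root_.map_pow, map_neg, _root_.map_one]

lemma pow_mem_of_coprime' {G : Type*} [CommGroup G] (H : Subgroup G) {x : G} {a b : ℕ}
    (h : Nat.Coprime a b) (ha : x ^ a ∈ H) (hb : x ^ b ∈ H) : x ∈ H := by
  have key : (1 : ℤ) = a * Nat.gcdA a b + b * Nat.gcdB a b := by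
    have h2 := Nat.gcd_eq_gcd_ab a b
    rwa [h.gcd_eq_one, Nat.cast_one] at h2
  have h3 : x = (x ^ a) ^ Nat.gcdA a b * (x ^ b) ^ Nat.gcdB a b := by
    rw [← zpow_natCast x a, ← zpow_natCast x b, ← _root_.zpow_mul, ← _root_.zpow_mul, ← _root_.zpow_add, ← key,
      zpow_one]
  rw [h3]
  exact Subgroup.mul_mem H (Subgroup.zpow_mem H ha _) (Subgroup.zpow_mem H hb _)

theorem stmt_3 {E L : Type*} [Field E] [Field L] [Algebra E L] [FiniteDimensional E L]
    (L₁ L₂ : IntermediateField E L) (hcomp : L₁ ⊔ L₂ = ⊤)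
    (hcop : Nat.Coprime (Module.finrank E L₁) (Module.finrank E L₂)) :
    ∀ x : Eˣ, x ∈ normGroup E L₁ ↔
      Units.map (algebraMap E L₂).toMonoidHom x ∈ normGroup L₂ L := by
  intro x
  haveI : FiniteDimensional (↥L₂) L := FiniteDimensional.right E (↥L₂) L
  haveI : FiniteDimensional (↥L₁) L := FiniteDimensional.right E (↥L₁) L
  constructor
  · rintro ⟨u, rfl⟩
    refine ⟨Units.map (algebraMap (↥L₁) L).toMonoidHom u, ?_⟩
    ext
    simp only [Units.coe_map, MonoidHom.coe_coe, RingHom.toMonoidHom_eq_coe, RingHom.coe_coe]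
    exact congrArg _ (norm_compositum L₁ L₂ hcomp hcop u)
  · rintro ⟨w, hw⟩
    have hw' : Algebra.norm (↥L₂) (w : L) = algebraMap E (↥L₂) (x : E) := by
      have := congrArg (Units.val) hw
      simpa using this
    have hm : x ^ Module.finrank E (↥L₁) ∈ normGroup E (↥L₁) := by
      refine ⟨Units.map (algebraMap E (↥L₁)).toMonoidHom x, ?_⟩
      ext
      simp [Algebra.norm_algebraMap]
    have hn : x ^ Module.finrank E (↥L₂) ∈ normGroup E (↥L₁) := by
      have hv0 : Algebra.norm (↥L₁) (w : L) ≠ 0 := by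
        rw [Algebra.norm_ne_zero_iff]
        exact Units.ne_zero w
      refine ⟨Units.mk0 _ hv0, ?_⟩
      ext
      show Algebra.norm E (Algebra.norm (↥L₁) (w : L)) = ↑(x ^ Module.finrank E (↥L₂))
      rw [norm_norm_general E (↥L₁) L, ← norm_norm_general E (↥L₂) L, hw',
        Algebra.norm_algebraMap, Units.val_pow_eq_pow_val]
    exact pow_mem_of_coprime' _ hcop hm hn
end

section
/- Let M/E be a finite Galois extension with nilpotent Galois group, and R an intermediate field with R ≠ E. For each prime p dividing [R:E], let M_p be the maximal p-extension of E inside M and R_p = R ∩ M_p. Then R equals the compositum of the fields R_p over all primes p dividing [R:E], and [R:E] = ∏_p [R_p:E]. -/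
open Module IntermediateField Subgroup Finset

section Hall
variable {G : Type*} [Group G] [Finite G]

lemma aux_hall (hnil : Group.IsNilpotent G) {p : ℕ} (hp : p ∈ (Nat.card G).primeFactors) :
    ∃ Q : Subgroup G, Q.Normal ∧ ¬ p ∣ Nat.card Q ∧
      Q.index = p ^ (Nat.card G).factorization p := by
  classical
  have hfin := Fintype.ofFinite G
  have hsyl : ∀ (q : ℕ) (_ : Fact q.Prime) (P : Sylow q G), (P : Subgroup G).Normal :=
    ((isNilpotent_of_finite_tfae (G := G)).out 0 3).mp hnil
  set T : Finset ℕ := (Nat.card G).primeFactors.erase p with hT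
  have hTprime : ∀ q ∈ T, q.Prime := fun q hq =>
    Nat.prime_of_mem_primeFactors (Finset.mem_of_mem_erase hq)
  set N : T → Subgroup G := fun q => (default : Sylow q.1 G) with hN
  have hcomm : Pairwise fun i j : T => ∀ x y : G, x ∈ N i → y ∈ N j → Commute x y := by
    rintro ⟨q₁, h₁⟩ ⟨q₂, h₂⟩ hne
    haveI f₁ := Fact.mk (hTprime q₁ h₁)
    haveI f₂ := Fact.mk (hTprime q₂ h₂)
    have hne' : q₁ ≠ q₂ := by simpa using hne
    apply Subgroup.commute_of_normal_of_disjoint _ _ (hsyl q₁ f₁ _) (hsyl q₂ f₂ _)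
    exact IsPGroup.disjoint_of_ne q₁ q₂ hne' _ _
      (default : Sylow q₁ G).isPGroup' (default : Sylow q₂ G).isPGroup'
  have hcard : ∀ i : T, Nat.card (N i) = i.1 ^ (Nat.card G).factorization i.1 := by
    rintro ⟨q, hq⟩
    haveI := Fact.mk (hTprime q hq)
    exact Sylow.card_eq_multiplicity _
  have hind : iSupIndep N := by
    apply Subgroup.independent_of_coprime_order hcomm
    rintro ⟨q₁, h₁⟩ ⟨q₂, h₂⟩ hne
    have hne' : q₁ ≠ q₂ := by simpa using hne
    rw [← Nat.card_eq_fintype_card, ← Nat.card_eq_fintype_card,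
      hcard ⟨q₁, h₁⟩, hcard ⟨q₂, h₂⟩]
    exact Nat.Coprime.pow _ _ ((Nat.coprime_primes (hTprime q₁ h₁) (hTprime q₂ h₂)).mpr hne')
  have hQnorm : (⨆ i, N i).Normal := by
    constructor
    intro x hx g
    refine Subgroup.iSup_induction N (C := fun y => g * y * g⁻¹ ∈ ⨆ i, N i) hx
      (fun i y hy => ?_) (by simpa using one_mem _) (fun a b ha hb => ?_)
    · haveI := Fact.mk (hTprime i.1 i.2)
      exact le_iSup N i ((hsyl i.1 ‹_› default).conj_mem y hy g)
    · show g * (a * b) * g⁻¹ ∈ ⨆ i, N i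
      have heq : g * (a * b) * g⁻¹ = (g * a * g⁻¹) * (g * b * g⁻¹) := by group
      rw [heq]; exact mul_mem ha hb
  have hinj := Subgroup.injective_noncommPiCoprod_of_iSupIndep (hcomm := hcomm) hind
  have hQcard : Nat.card (⨆ i, N i : Subgroup G)
      = ∏ q ∈ T, q ^ (Nat.card G).factorization q := by
    rw [← Subgroup.noncommPiCoprod_range (hcomm := hcomm)]
    have h1 : Nat.card ((Subgroup.noncommPiCoprod hcomm).range)
        = Nat.card (∀ i, N i) := by
      exact (Nat.card_congr (Equiv.ofInjective _ hinj)).symm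
    rw [h1, Nat.card_pi]
    rw [← Finset.prod_coe_sort T (fun q => q ^ (Nat.card G).factorization q)]
    exact Finset.prod_congr rfl (fun i _ => hcard i)
  have hpcop : Nat.Coprime p (Nat.card (⨆ i, N i : Subgroup G)) := by
    rw [hQcard]
    exact Nat.Coprime.prod_right fun q hq =>
      Nat.Coprime.pow_right _ ((Nat.coprime_primes (Nat.prime_of_mem_primeFactors hp)
        (hTprime q hq)).mpr (Finset.ne_of_mem_erase hq).symm)
  have hcardG : Nat.card G = p ^ (Nat.card G).factorization p
      * ∏ q ∈ T, q ^ (Nat.card G).factorization q := by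
    conv_lhs => rw [← Nat.factorization_prod_pow_eq_self (Nat.card_pos (α := G)).ne']
    rw [Finsupp.prod, Nat.support_factorization]
    exact (Finset.mul_prod_erase _ _ hp).symm
  refine ⟨⨆ i, N i, hQnorm, ?_, ?_⟩
  · exact (Nat.Prime.coprime_iff_not_dvd (Nat.prime_of_mem_primeFactors hp)).mp hpcop
  · have h2 := Subgroup.index_mul_card (⨆ i, N i : Subgroup G)
    rw [hcardG, hQcard] at h2
    have hpos : 0 < ∏ q ∈ T, q ^ (Nat.card G).factorization q :=
      Finset.prod_pos fun q hq => pow_pos (hTprime q hq).pos _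
    exact Nat.eq_of_mul_eq_mul_right hpos h2
end Hall

section Gal
variable {E M : Type*} [Field E] [Field M] [Algebra E M] [FiniteDimensional E M]

lemma aux_finrank_fixedField [IsGalois E M] (H : Subgroup (M ≃ₐ[E] M)) :
    finrank E (fixedField H) = H.index := by
  classical
  have h1 : finrank E (fixedField H) * finrank (fixedField H) M = finrank E M :=
    Module.finrank_mul_finrank E (fixedField H) M
  rw [IntermediateField.finrank_fixedField_eq_card] at h1
  have h2 : H.index * Nat.card H = Nat.card (M ≃ₐ[E] M) := Subgroup.index_mul_card H
  rw [IsGalois.card_aut_eq_finrank] at h2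
  exact Nat.eq_of_mul_eq_mul_right Nat.card_pos (by rw [h1, ← h2])

lemma aux_fixing_anti {K L : IntermediateField E M} (h : K ≤ L) :
    fixingSubgroup L ≤ fixingSubgroup K := fun g hg => by
  rw [IntermediateField.mem_fixingSubgroup_iff] at hg ⊢
  exact fun x hx => hg x (h hx)

lemma aux_ff_anti {H₁ H₂ : Subgroup (M ≃ₐ[E] M)} (h : H₁ ≤ H₂) :
    fixedField H₂ ≤ fixedField H₁ :=
  (IntermediateField.le_iff_le H₁ (fixedField H₂)).mpr
    (by rw [IntermediateField.fixingSubgroup_fixedField]; exact h)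

lemma aux_finrank_eq_index [IsGalois E M] (K : IntermediateField E M) :
    finrank E K = (fixingSubgroup K).index := by
  conv_lhs => rw [← IsGalois.fixedField_fixingSubgroup K]
  exact aux_finrank_fixedField _

lemma aux_finrank_dvd [IsGalois E M] {K L : IntermediateField E M} (h : K ≤ L) :
    finrank E K ∣ finrank E L := by
  rw [aux_finrank_eq_index K, aux_finrank_eq_index L]
  exact Subgroup.index_dvd_of_le (aux_fixing_anti h)

lemma aux_ff_sup [IsGalois E M] (R : IntermediateField E M) (Q : Subgroup (M ≃ₐ[E] M)) :
    fixedField (fixingSubgroup R ⊔ Q) = R ⊓ fixedField Q := by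
  apply le_antisymm
  · apply le_inf
    · conv_rhs => rw [← IsGalois.fixedField_fixingSubgroup R]
      exact aux_ff_anti le_sup_left
    · exact aux_ff_anti le_sup_right
  · refine (IntermediateField.le_iff_le _ _).mpr (sup_le (aux_fixing_anti inf_le_left) ?_)
    conv_lhs => rw [← IntermediateField.fixingSubgroup_fixedField Q]
    exact aux_fixing_anti inf_le_right

end Gal

lemma aux_key {E M : Type*} [Field E] [Field M] [Algebra E M] [FiniteDimensional E M]
    [IsGalois E M] (hnil : Group.IsNilpotent (M ≃ₐ[E] M))
    (R : IntermediateField E M) (Mp : ℕ → IntermediateField E M)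
    (hMpPow : ∀ p : ℕ, p.Prime → ∃ k : ℕ, Module.finrank E (Mp p) = p ^ k)
    (hMpMax : ∀ p : ℕ, p.Prime → ∀ K : IntermediateField E M,
      (∃ k : ℕ, Module.finrank E K = p ^ k) → K ≤ Mp p)
    {p : ℕ} (hp : p ∈ (finrank E R).primeFactors) :
    finrank E ↥(R ⊓ Mp p) = p ^ (finrank E R).factorization p := by
  classical
  set n := finrank E R with hn
  obtain ⟨pp, hpn, hn0⟩ := Nat.mem_primeFactors.mp hp
  have hndvd : n ∣ Nat.card (M ≃ₐ[E] M) := by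
    rw [hn, aux_finrank_eq_index R]
    exact Subgroup.index_dvd_card _
  have hpG : p ∈ (Nat.card (M ≃ₐ[E] M)).primeFactors :=
    Nat.mem_primeFactors.mpr ⟨pp, hpn.trans hndvd, Nat.card_pos.ne'⟩
  obtain ⟨Q, hQnorm, hQp, hQidx⟩ := aux_hall hnil hpG
  haveI := hQnorm
  have hFrank : finrank E (fixedField Q)
      = p ^ (Nat.card (M ≃ₐ[E] M)).factorization p := by
    rw [aux_finrank_fixedField, hQidx]
  have hFM : fixedField Q ≤ Mp p := hMpMax p pp _ ⟨_, hFrank⟩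
  set A := fixingSubgroup R with hA
  have h1 : A.relIndex (A ⊔ Q) * (A ⊔ Q).index = A.index :=
    Subgroup.relIndex_mul_index le_sup_left
  have h2 : Q.relIndex (A ⊔ Q) * (A ⊔ Q).index = Q.index :=
    Subgroup.relIndex_mul_index le_sup_right
  have h3 : Q.relIndex (A ⊔ Q) = Q.relIndex A := Subgroup.relIndex_sup_right A Q
  have h4 : Q.relIndex A * Nat.card (Q.subgroupOf A) = Nat.card A :=
    Subgroup.index_mul_card _
  have h5 : A.index * Nat.card A = Nat.card (M ≃ₐ[E] M) := Subgroup.index_mul_card A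
  have h6 : Q.index * Nat.card Q = Nat.card (M ≃ₐ[E] M) := Subgroup.index_mul_card Q
  have hidx0 : (A ⊔ Q).index ≠ 0 := Subgroup.index_ne_zero_of_finite
  have hrel0 : Q.relIndex A ≠ 0 := Subgroup.index_ne_zero_of_finite
  have hkey : A.relIndex (A ⊔ Q) * Nat.card (Q.subgroupOf A) = Nat.card Q := by
    apply Nat.eq_of_mul_eq_mul_right
      (Nat.pos_of_ne_zero (mul_ne_zero hidx0 hrel0))
    calc A.relIndex (A ⊔ Q) * Nat.card (Q.subgroupOf A) * ((A ⊔ Q).index * Q.relIndex A)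
        = (A.relIndex (A ⊔ Q) * (A ⊔ Q).index) * (Q.relIndex A * Nat.card (Q.subgroupOf A)) := by
          ring
      _ = Nat.card (M ≃ₐ[E] M) := by rw [h1, h4, h5]
      _ = Q.index * Nat.card Q := h6.symm
      _ = (Q.relIndex (A ⊔ Q) * (A ⊔ Q).index) * Nat.card Q := by rw [h2]
      _ = Nat.card Q * ((A ⊔ Q).index * Q.relIndex A) := by rw [h3]; ring
  have hrdvd : A.relIndex (A ⊔ Q) ∣ Nat.card Q := ⟨_, hkey.symm⟩
  have hpr : ¬ p ∣ A.relIndex (A ⊔ Q) := fun h => hQp (h.trans hrdvd)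
  have hAidx : A.index = n := (aux_finrank_eq_index R).symm
  have hdvd_idx : p ^ n.factorization p ∣ (A ⊔ Q).index := by
    have hd : p ^ n.factorization p ∣ A.relIndex (A ⊔ Q) * (A ⊔ Q).index := by
      rw [h1, hAidx]; exact Nat.ordProj_dvd n p
    have hcop : Nat.Coprime (p ^ n.factorization p) (A.relIndex (A ⊔ Q)) :=
      Nat.Coprime.pow_left _ ((pp.coprime_iff_not_dvd).mpr hpr)
    exact hcop.dvd_of_dvd_mul_left hd
  have hlow : p ^ n.factorization p ∣ finrank E ↥(R ⊓ Mp p) := by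
    have e : finrank E ↥(R ⊓ fixedField Q) = (A ⊔ Q).index := by
      rw [← aux_ff_sup R Q]; exact aux_finrank_fixedField _
    have hle : R ⊓ fixedField Q ≤ R ⊓ Mp p := inf_le_inf_left R hFM
    exact (e ▸ hdvd_idx : _ ∣ finrank E ↥(R ⊓ fixedField Q)).trans (aux_finrank_dvd hle)
  have hup : finrank E ↥(R ⊓ Mp p) ∣ p ^ n.factorization p := by
    obtain ⟨k, hk⟩ := hMpPow p pp
    have d1 : finrank E ↥(R ⊓ Mp p) ∣ n := aux_finrank_dvd inf_le_left
    have d2 : finrank E ↥(R ⊓ Mp p) ∣ p ^ k := hk ▸ aux_finrank_dvd inf_le_right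
    obtain ⟨j, _, hj⟩ := (Nat.dvd_prime_pow pp).mp d2
    rw [hj]
    exact pow_dvd_pow _ ((Nat.Prime.pow_dvd_iff_le_factorization pp hn0).mp (hj ▸ d1))
  exact Nat.dvd_antisymm hup hlow

theorem stmt_4 {E M : Type*} [Field E] [Field M] [Algebra E M] [FiniteDimensional E M]
    [IsGalois E M] (hnil : Group.IsNilpotent (M ≃ₐ[E] M))
    (R : IntermediateField E M) (hR : R ≠ ⊥)
    (Mp : ℕ → IntermediateField E M)
    -- `Mp p` is the maximal `p`-extension of `E` inside `M`:
    (hMpPow : ∀ p : ℕ, p.Prime → ∃ k : ℕ, Module.finrank E (Mp p) = p ^ k)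
    (hMpMax : ∀ p : ℕ, p.Prime → ∀ K : IntermediateField E M,
      (∃ k : ℕ, Module.finrank E K = p ^ k) → K ≤ Mp p) :
    R = (⨆ p ∈ (Module.finrank E R).primeFactors, (R ⊓ Mp p)) ∧
      Module.finrank E R =
        ∏ p ∈ (Module.finrank E R).primeFactors, Module.finrank E ↥(R ⊓ Mp p) := by
  classical
  set n := finrank E R with hn
  have hn0 : n ≠ 0 := Module.finrank_pos.ne'
  have hkey : ∀ p ∈ n.primeFactors,
      finrank E ↥(R ⊓ Mp p) = p ^ n.factorization p := fun p hp =>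
    aux_key hnil R Mp hMpPow hMpMax hp
  have hfact : ∏ p ∈ n.primeFactors, p ^ n.factorization p = n := by
    have h := Nat.factorization_prod_pow_eq_self hn0
    simpa [Finsupp.prod, Nat.support_factorization] using h
  set S := ⨆ p ∈ n.primeFactors, (R ⊓ Mp p) with hS
  have hSR : S ≤ R := iSup₂_le fun p _ => inf_le_left
  have hd1 : finrank E S ∣ n := aux_finrank_dvd hSR
  have hS0 : finrank E ↥S ≠ 0 := Module.finrank_pos.ne'
  have hd2 : n ∣ finrank E S := by
    rw [← Nat.factorization_le_iff_dvd hn0 hS0]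
    rw [Finsupp.le_iff]
    intro p hp
    rw [Nat.support_factorization] at hp
    rw [← Nat.Prime.pow_dvd_iff_le_factorization (Nat.prime_of_mem_primeFactors hp) hS0,
      ← hkey p hp]
    exact aux_finrank_dvd
      (le_iSup₂ (f := fun p (_ : p ∈ n.primeFactors) => R ⊓ Mp p) p hp)
  have hfr : finrank E S = n := Nat.dvd_antisymm hd1 hd2
  have hRS : R = S :=
    (IntermediateField.eq_of_le_of_finrank_eq hSR (by rw [hfr])).symm
  refine ⟨hRS, ?_⟩
  rw [Finset.prod_congr rfl hkey, hfact]
end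

section
/- Let M/E be a finite Galois extension with nilpotent Galois group, R an intermediate field, and for each prime p dividing [R:E] let R_p = R ∩ M_p where M_p is the maximal p-extension of E in M. Then N(R/E) = ⋂_p N(R_p/E), and E*/N(R/E) is isomorphic to the direct product of the groups E*/N(R_p/E). -/
open Module IntermediateField

section Aux

/-- In a finite nilpotent group, every subgroup `H` is contained in a subgroup whose index is
the `p`-part of the index of `H`. -/
lemma aux_group {G : Type*} [Group G] [Finite G] (hnil : Group.IsNilpotent G)
    (H : Subgroup G) (p : ℕ) (hp : p.Prime) :
    ∃ H' : Subgroup G, H ≤ H' ∧ H'.index = p ^ ((H.index).factorization p) := by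
  classical
  by_cases hdvd : p ∣ H.index
  case neg =>
    refine ⟨⊤, le_top, ?_⟩
    rw [Nat.factorization_eq_zero_of_not_dvd hdvd, pow_zero, Subgroup.index_top]
  case pos =>
  have hcard0 : Nat.card G ≠ 0 := Nat.card_pos.ne'
  have hindex0 : H.index ≠ 0 := Subgroup.index_ne_zero_of_finite
  have hpG : p ∣ Nat.card G := hdvd.trans H.index_dvd_card
  have hpmem : p ∈ (Nat.card G).primeFactors := Nat.mem_primeFactors.mpr ⟨hp, hpG, hcard0⟩
  obtain ⟨e⟩ := ((isNilpotent_of_finite_tfae (G := G)).out 0 4).mp hnil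
  haveI : Fact p.Prime := ⟨hp⟩
  set v := (Nat.card G).factorization p with hv
  set Pm : (Nat.card G).primeFactors := ⟨p, hpmem⟩ with hPm
  let ψ : G →* (∀ Q : Sylow ((Pm : ℕ)) G, (↑Q : Subgroup G)) :=
    (Pi.evalMonoidHom _ Pm).comp e.symm.toMonoidHom
  have hψ : Function.Surjective ψ := by
    intro y
    refine ⟨e (Pi.mulSingle Pm y), ?_⟩
    simp [ψ]
  set K := ψ.ker with hKdef
  haveI : K.Normal := MonoidHom.normal_ker ψ
  have hsyl : ∀ (q : ℕ) (_ : Fact q.Prime) (Q : Sylow q G), (↑Q : Subgroup G).Normal :=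
    ((isNilpotent_of_finite_tfae (G := G)).out 0 3).mp hnil
  letI : Unique (Sylow p G) :=
    Sylow.unique_of_normal (Classical.arbitrary _) (hsyl p ⟨hp⟩ _)
  have hKindex : K.index = p ^ v := by
    rw [hKdef, Subgroup.index_ker, MonoidHom.range_eq_top.mpr hψ]
    rw [Subgroup.card_top]
    rw [Nat.card_congr (Equiv.piUnique _)]
    exact Sylow.card_eq_multiplicity _
  -- p does not divide the cardinality of K
  have hKcard : ¬ p ∣ Nat.card K := by
    intro hpK
    have h1 : Nat.card K * K.index = Nat.card G := K.card_mul_index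
    have : p ^ (v + 1) ∣ Nat.card G := by
      rw [← h1, pow_succ, hKindex, mul_comm (Nat.card ↥K)]
      exact mul_dvd_mul dvd_rfl hpK
    rw [hv] at this
    exact Nat.pow_succ_factorization_not_dvd hcard0 hp this
  set H' := H ⊔ K with hH'
  obtain ⟨a, hav, haeq⟩ := (Nat.dvd_prime_pow hp).mp
    (hKindex ▸ Subgroup.index_dvd_of_le (le_sup_right : K ≤ H'))
  have e1 : H.relIndex H' * H'.index = H.index := Subgroup.relIndex_mul_index le_sup_left
  have e2 : K.relIndex H' * H'.index = K.index := Subgroup.relIndex_mul_index le_sup_right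
  have e3 : K.relIndex H' = K.relIndex H := Subgroup.relIndex_sup_right H K
  have e4 : Nat.card (K.subgroupOf H) * K.relIndex H = Nat.card H :=
    Subgroup.card_mul_index (K.subgroupOf H)
  have e5 : Nat.card H * H.index = Nat.card G := H.card_mul_index
  have e6 : Nat.card K * K.index = Nat.card G := K.card_mul_index
  have hK0 : K.index ≠ 0 := Subgroup.index_ne_zero_of_finite
  have key : (H.relIndex H' * Nat.card (K.subgroupOf H)) * K.index = Nat.card K * K.index := by
    calc (H.relIndex H' * Nat.card (K.subgroupOf H)) * K.index
        = (H.relIndex H' * Nat.card (K.subgroupOf H)) * (K.relIndex H' * H'.index) := by rw [e2]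
      _ = (H.relIndex H' * H'.index) * (Nat.card (K.subgroupOf H) * K.relIndex H') := by ring
      _ = H.index * (Nat.card (K.subgroupOf H) * K.relIndex H) := by rw [e1, e3]
      _ = H.index * Nat.card H := by rw [e4]
      _ = Nat.card G := by rw [mul_comm, e5]
      _ = Nat.card K * K.index := e6.symm
  have hdvdK : H.relIndex H' ∣ Nat.card K :=
    ⟨_, (Nat.eq_of_mul_eq_mul_right (Nat.pos_of_ne_zero hK0) key).symm⟩
  have hpnotrel : ¬ p ∣ H.relIndex H' := fun h => hKcard (h.trans hdvdK)
  have hrel0 : H.relIndex H' ≠ 0 := by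
    intro h0; rw [h0, zero_mul] at e1; exact hindex0 e1.symm
  have hfac : H.index.factorization p = a := by
    rw [← e1, haeq, Nat.factorization_mul hrel0 (pow_ne_zero _ hp.pos.ne'),
      Nat.Prime.factorization_pow hp]
    simp [Nat.factorization_eq_zero_of_not_dvd hpnotrel]
  exact ⟨H', le_sup_left, by rw [hfac, haeq]⟩

variable {E M : Type*} [Field E] [Field M] [Algebra E M] [FiniteDimensional E M]

lemma finrank_fixedField_eq_index' [IsGalois E M] (H' : Subgroup (M ≃ₐ[E] M)) :
    finrank E (IntermediateField.fixedField H') = H'.index := by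
  classical
  have a1 : finrank (fixedField H') M = Fintype.card H' :=
    (finrank_fixedField_eq_card H').trans Nat.card_eq_fintype_card
  have a3 : finrank E (fixedField H') * finrank (fixedField H') M = finrank E M :=
    finrank_mul_finrank _ _ _
  have a5 : Nat.card H' * H'.index = Nat.card (M ≃ₐ[E] M) := H'.card_mul_index
  have a4 : Fintype.card (M ≃ₐ[E] M) = finrank E M := Nat.card_eq_fintype_card.symm.trans (IsGalois.card_aut_eq_finrank E M)
  have hpos : 0 < Fintype.card H' := Fintype.card_pos
  apply Nat.eq_of_mul_eq_mul_right hpos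
  rw [← a1]
  calc finrank E (fixedField H') * finrank (fixedField H') M
      = finrank E M := a3
    _ = Fintype.card (M ≃ₐ[E] M) := a4.symm
    _ = Nat.card (M ≃ₐ[E] M) := (Nat.card_eq_fintype_card).symm
    _ = Nat.card H' * H'.index := a5.symm
    _ = H'.index * finrank (fixedField H') M := by
        rw [Nat.card_eq_fintype_card, a1, mul_comm]

lemma index_fixingSubgroup' [IsGalois E M] (R : IntermediateField E M) :
    (IntermediateField.fixingSubgroup R).index = finrank E R := by
  rw [← finrank_fixedField_eq_index' (fixingSubgroup R), IsGalois.fixedField_fixingSubgroup R]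

lemma fixedField_le' [IsGalois E M] {R : IntermediateField E M}
    {H' : Subgroup (M ≃ₐ[E] M)} (hle : IntermediateField.fixingSubgroup R ≤ H') :
    IntermediateField.fixedField H' ≤ R := by
  have : fixedField H' ≤ fixedField (fixingSubgroup R) := by
    rw [IntermediateField.le_iff_le, IntermediateField.fixingSubgroup_fixedField]
    exact hle
  rwa [IsGalois.fixedField_fixingSubgroup R] at this

lemma pow_finrank_mem_normGroup (K : IntermediateField E M) (u : Eˣ) :
    u ^ finrank E K ∈ normGroup E K := by
  refine ⟨Units.map (algebraMap E K : E →+* K).toMonoidHom u, ?_⟩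
  ext
  push_cast [Units.coe_map]
  exact Algebra.norm_algebraMap (u : E)

lemma normGroup_le_of_le [IsGalois E M] {K L : IntermediateField E M} (h : K ≤ L) :
    normGroup E L ≤ normGroup E K := by
  letI : Algebra K L := (inclusion h).toAlgebra
  haveI : IsScalarTower E K L := IsScalarTower.of_algebraMap_eq' rfl
  haveI hsep : Algebra.IsSeparable E ↥L := Algebra.isSeparable_tower_bot_of_isSeparable E L M
  rintro x ⟨w, rfl⟩
  refine ⟨Units.map (Algebra.norm (↥K) : ↥L →* ↥K) w, ?_⟩
  ext
  simp only [Units.coe_map, MonoidHom.coe_coe]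
  exact Algebra.norm_norm (R := E) (S := ↥K) (a := (w : ↥L))

lemma exists_pow_mem_normGroup_of_le [IsGalois E M] {K L : IntermediateField E M} (h : K ≤ L) :
    ∃ d : ℕ, finrank E K * d = finrank E L ∧
      ∀ u ∈ normGroup E K, u ^ d ∈ normGroup E L := by
  letI : Algebra K L := (inclusion h).toAlgebra
  letI : Module (↥K) (↥L) := Algebra.toModule
  haveI : IsScalarTower E K L := IsScalarTower.of_algebraMap_eq' rfl
  haveI hsep : Algebra.IsSeparable E ↥L := Algebra.isSeparable_tower_bot_of_isSeparable E L M
  refine ⟨finrank K L, finrank_mul_finrank _ _ _, ?_⟩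
  rintro u ⟨v, rfl⟩
  refine ⟨Units.map ((algebraMap (↥K) (↥L)) : ↥K →+* ↥L).toMonoidHom v, ?_⟩
  ext
  simp only [Units.coe_map, MonoidHom.coe_coe, RingHom.toMonoidHom_eq_coe,
    Units.val_pow_eq_pow_val]
  rw [← Algebra.norm_norm (R := E) (S := ↥K) (a := algebraMap (↥K) (↥L) (v : ↥K)),
    Algebra.norm_algebraMap, map_pow]

/-- The degree of `R ⊓ Mp p` over `E` is exactly the `p`-part of the degree of `R` over `E`. -/
lemma hdeg_lemma [IsGalois E M]
    (hnil : Group.IsNilpotent (M ≃ₐ[E] M)) (R : IntermediateField E M)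
    (Mp : ℕ → IntermediateField E M)
    (hMpPow : ∀ p : ℕ, p.Prime → ∃ k : ℕ, Module.finrank E (Mp p) = p ^ k)
    (hMpMax : ∀ p : ℕ, p.Prime → ∀ K : IntermediateField E M,
      (∃ k : ℕ, Module.finrank E K = p ^ k) → K ≤ Mp p)
    {p : ℕ} (hp : p ∈ (finrank E ↥R).primeFactors) :
    finrank E ↥(R ⊓ Mp p) = p ^ ((finrank E ↥R).factorization p) := by
  have hpp : p.Prime := Nat.prime_of_mem_primeFactors hp
  have hn0 : finrank E ↥R ≠ 0 := Module.finrank_pos.ne'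
  obtain ⟨k, hk⟩ := hMpPow p hpp
  obtain ⟨d1, hd1, -⟩ := exists_pow_mem_normGroup_of_le (inf_le_right : R ⊓ Mp p ≤ Mp p)
  obtain ⟨d2, hd2, -⟩ := exists_pow_mem_normGroup_of_le (inf_le_left : R ⊓ Mp p ≤ R)
  obtain ⟨j, hjk, hj⟩ := (Nat.dvd_prime_pow hpp).mp
    (show finrank E ↥(R ⊓ Mp p) ∣ p ^ k from hk ▸ ⟨d1, hd1.symm⟩)
  have hjle : j ≤ (finrank E ↥R).factorization p :=
    (Nat.Prime.pow_dvd_iff_le_factorization hpp hn0).mp (hj ▸ ⟨d2, hd2.symm⟩)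
  haveI : Finite (M ≃ₐ[E] M) := Finite.of_fintype _
  obtain ⟨H', hle, hidx⟩ := aux_group hnil (fixingSubgroup R) p hpp
  have hFR : fixedField H' ≤ R := fixedField_le' hle
  have hF : finrank E ↥(fixedField H') = p ^ ((finrank E ↥R).factorization p) := by
    rw [finrank_fixedField_eq_index', hidx, index_fixingSubgroup']
  have hFMp : fixedField H' ≤ Mp p := hMpMax p hpp _ ⟨_, hF⟩
  obtain ⟨d3, hd3, -⟩ := exists_pow_mem_normGroup_of_le (le_inf hFR hFMp)
  have hdvd : p ^ ((finrank E ↥R).factorization p) ∣ finrank E ↥(R ⊓ Mp p) :=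
    hF ▸ ⟨d3, hd3.symm⟩
  rw [hj] at hdvd
  have hge := (Nat.pow_dvd_pow_iff_le_right hpp.one_lt).mp hdvd
  rw [hj, le_antisymm hjle hge]

end Aux

set_option maxHeartbeats 1000000 in
theorem stmt_5 {E M : Type*} [Field E] [Field M] [Algebra E M] [FiniteDimensional E M]
    [IsGalois E M] (hnil : Group.IsNilpotent (M ≃ₐ[E] M))
    (R : IntermediateField E M)
    (Mp : ℕ → IntermediateField E M)
    -- `Mp p` is the maximal `p`-extension of `E` inside `M`:
    (hMpPow : ∀ p : ℕ, p.Prime → ∃ k : ℕ, Module.finrank E (Mp p) = p ^ k)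
    (hMpMax : ∀ p : ℕ, p.Prime → ∀ K : IntermediateField E M,
      (∃ k : ℕ, Module.finrank E K = p ^ k) → K ≤ Mp p) :
    normGroup E R = (⨅ p ∈ (Module.finrank E R).primeFactors, normGroup E ↥(R ⊓ Mp p)) ∧
      Nonempty ((Eˣ ⧸ normGroup E R) ≃*
        ((p : (Module.finrank E R).primeFactors) → Eˣ ⧸ normGroup E ↥(R ⊓ Mp p))) := by
  classical
  have hn0 : finrank E ↥R ≠ 0 := Module.finrank_pos.ne'
  have hdeg : ∀ p ∈ (finrank E ↥R).primeFactors,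
      finrank E ↥(R ⊓ Mp p) = p ^ ((finrank E ↥R).factorization p) :=
    fun p hp => hdeg_lemma hnil R Mp hMpPow hMpMax hp
  -- Part 1
  have part1 : normGroup E ↥R
      = ⨅ p ∈ (Module.finrank E R).primeFactors, normGroup E ↥(R ⊓ Mp p) := by
    apply le_antisymm
    · refine le_iInf₂ fun p hp => ?_
      exact normGroup_le_of_le (inf_le_left : R ⊓ Mp p ≤ R)
    · intro x hx
      have hx' : ∀ p ∈ (finrank E ↥R).primeFactors, x ∈ normGroup E ↥(R ⊓ Mp p) := by
        intro p hp
        exact (Subgroup.mem_iInf.mp ((Subgroup.mem_iInf.mp hx) p)) hp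
      -- a small Bezout fact
      have hgcd2 : ∀ a b : ℕ, x ^ a ∈ normGroup E ↥R → x ^ b ∈ normGroup E ↥R →
          x ^ Nat.gcd a b ∈ normGroup E ↥R := by
        intro a b ha hb
        have key : x ^ ((Nat.gcd a b : ℤ)) =
            (x ^ a) ^ Nat.gcdA a b * (x ^ b) ^ Nat.gcdB a b := by
          rw [← zpow_natCast x a, ← zpow_natCast x b, ← zpow_mul, ← zpow_mul, ← zpow_add,
            ← Nat.gcd_eq_gcd_ab]
        rw [← zpow_natCast x (Nat.gcd a b), key]
        exact mul_mem (Subgroup.zpow_mem _ ha _) (Subgroup.zpow_mem _ hb _)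
      -- `x` raised to each cofactor is a norm from `R`
      have hxd : ∀ p ∈ (finrank E ↥R).primeFactors,
          x ^ (finrank E ↥R / p ^ ((finrank E ↥R).factorization p)) ∈ normGroup E ↥R := by
        intro p hp
        have hpp : p.Prime := Nat.prime_of_mem_primeFactors hp
        obtain ⟨d, hd, hmem⟩ := exists_pow_mem_normGroup_of_le (inf_le_left : R ⊓ Mp p ≤ R)
        rw [hdeg p hp] at hd
        have : finrank E ↥R / p ^ ((finrank E ↥R).factorization p) = d :=
          Nat.div_eq_of_eq_mul_left (pow_pos hpp.pos _) (hd.symm.trans (mul_comm _ _))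
        rw [this]
        exact hmem x (hx' p hp)
      -- fold the gcd over the prime factors
      have hfold : ∀ T : Finset ℕ,
          (∀ p ∈ T, x ^ (finrank E ↥R / p ^ ((finrank E ↥R).factorization p))
            ∈ normGroup E ↥R) →
          x ^ (Nat.gcd (finrank E ↥R)
            (T.gcd (fun p => finrank E ↥R / p ^ ((finrank E ↥R).factorization p))))
            ∈ normGroup E ↥R := by
        intro T
        induction T using Finset.induction_on with
        | empty =>
          intro _
          simpa [Finset.gcd_empty] using pow_finrank_mem_normGroup R x
        | @insert a T' hnotmem ih =>
          intro hT
          rw [Finset.gcd_insert]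
          have hgg : GCDMonoid.gcd (finrank E ↥R / a ^ ((finrank E ↥R).factorization a))
              (T'.gcd (fun p => finrank E ↥R / p ^ ((finrank E ↥R).factorization p)))
              = Nat.gcd (finrank E ↥R / a ^ ((finrank E ↥R).factorization a))
              (T'.gcd (fun p => finrank E ↥R / p ^ ((finrank E ↥R).factorization p))) := rfl
          rw [hgg, ← Nat.gcd_assoc, Nat.gcd_comm (finrank E ↥R), Nat.gcd_assoc]
          exact hgcd2 _ _ (hT a (Finset.mem_insert_self a T'))
            (ih fun p hp => hT p (Finset.mem_insert_of_mem hp))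
      have hmain := hfold (finrank E ↥R).primeFactors hxd
      -- the gcd is 1
      have g1 : Nat.gcd (finrank E ↥R)
          ((finrank E ↥R).primeFactors.gcd
            (fun p => finrank E ↥R / p ^ ((finrank E ↥R).factorization p))) = 1 := by
        by_contra hne
        obtain ⟨r, hr, hrdvd⟩ := Nat.exists_prime_and_dvd hne
        have hrn : r ∣ finrank E ↥R := hrdvd.trans (Nat.gcd_dvd_left _ _)
        have hrS : r ∈ (finrank E ↥R).primeFactors := Nat.mem_primeFactors.mpr ⟨hr, hrn, hn0⟩
        have hrd : r ∣ finrank E ↥R / r ^ ((finrank E ↥R).factorization r) :=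
          (hrdvd.trans (Nat.gcd_dvd_right _ _)).trans (Finset.gcd_dvd hrS)
        obtain ⟨c, hc⟩ := Nat.ordProj_dvd (finrank E ↥R) r
        have hcc : finrank E ↥R / r ^ ((finrank E ↥R).factorization r) = c :=
          Nat.div_eq_of_eq_mul_left (pow_pos hr.pos _) (hc.trans (mul_comm _ _))
        rw [hcc] at hrd
        have : r ^ ((finrank E ↥R).factorization r + 1) ∣ finrank E ↥R := by
          rw [pow_succ]
          conv_rhs => rw [hc]
          exact mul_dvd_mul dvd_rfl hrd
        exact Nat.pow_succ_factorization_not_dvd hn0 hr this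
      rw [g1, pow_one] at hmain
      exact hmain
  refine ⟨part1, ?_⟩
  -- Part 2
  let S := (Module.finrank E ↥R).primeFactors
  let φ : Eˣ →* ((p : S) → Eˣ ⧸ normGroup E ↥(R ⊓ Mp p)) :=
    { toFun := fun x p => QuotientGroup.mk x
      map_one' := rfl
      map_mul' := fun x y => rfl }
  have hker : φ.ker = normGroup E ↥R := by
    rw [part1]
    ext x
    constructor
    · intro h
      rw [Subgroup.mem_iInf]
      intro p
      rw [Subgroup.mem_iInf]
      intro hp
      have h1 : φ x = 1 := h
      have h2 : (QuotientGroup.mk x : Eˣ ⧸ normGroup E ↥(R ⊓ Mp p)) = 1 :=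
        congrFun h1 ⟨p, hp⟩
      exact (QuotientGroup.eq_one_iff x).mp h2
    · intro h
      have h' : ∀ p ∈ S, x ∈ normGroup E ↥(R ⊓ Mp p) := by
        intro p hp
        exact (Subgroup.mem_iInf.mp ((Subgroup.mem_iInf.mp h) p)) hp
      show φ x = 1
      funext p
      exact (QuotientGroup.eq_one_iff _).mpr (h' p p.2)
  have hsurj : Function.Surjective φ := by
    intro f
    let v : ℕ → ℕ := fun q => q ^ ((finrank E ↥R).factorization q)
    let c : S → ℕ := fun p => ∏ q ∈ S.erase (p : ℕ), v q
    have hone : ∀ (p : S) (u : Eˣ),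
        (QuotientGroup.mk u : Eˣ ⧸ normGroup E ↥(R ⊓ Mp (p : ℕ)))
          ^ ((v (p : ℕ) : ℕ) : ℤ) = 1 := by
      intro p u
      have hm : u ^ (v (p : ℕ)) ∈ normGroup E ↥(R ⊓ Mp (p : ℕ)) := by
        have := pow_finrank_mem_normGroup (R ⊓ Mp (p : ℕ)) u
        rwa [hdeg (p : ℕ) p.2] at this
      calc (QuotientGroup.mk u : Eˣ ⧸ normGroup E ↥(R ⊓ Mp (p : ℕ)))
            ^ ((v (p : ℕ) : ℕ) : ℤ)
          = (QuotientGroup.mk u : Eˣ ⧸ normGroup E ↥(R ⊓ Mp (p : ℕ))) ^ (v (p : ℕ)) :=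
            zpow_natCast _ _
        _ = QuotientGroup.mk' (normGroup E ↥(R ⊓ Mp (p : ℕ))) (u ^ (v (p : ℕ))) :=
            (map_pow (QuotientGroup.mk' (normGroup E ↥(R ⊓ Mp (p : ℕ)))) u _).symm
        _ = 1 := (QuotientGroup.eq_one_iff _).mpr hm
    have hcop : ∀ p : S, Nat.Coprime (v (p : ℕ)) (c p) := by
      intro p
      apply Nat.Coprime.prod_right
      intro q hq
      have hqp : q ≠ (p : ℕ) := Finset.ne_of_mem_erase hq
      have hq' : q ∈ S := Finset.mem_of_mem_erase hq
      exact Nat.Coprime.pow _ _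
        ((Nat.coprime_primes (Nat.prime_of_mem_primeFactors p.2)
          (Nat.prime_of_mem_primeFactors hq')).mpr (Ne.symm hqp))
    let xp : S → Eˣ := fun p => (f p).out
    let z : S → Eˣ := fun p => xp p ^ (Nat.gcdB (v (p : ℕ)) (c p) * (c p : ℤ))
    refine ⟨∏ p : S, z p, ?_⟩
    funext q
    have hφ : φ (∏ p : S, z p) q
        = QuotientGroup.mk' (normGroup E ↥(R ⊓ Mp (q : ℕ))) (∏ p : S, z p) := rfl
    rw [hφ, map_prod]
    rw [Finset.prod_eq_single_of_mem q (Finset.mem_univ q) ?_]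
    · -- diagonal term
      have hbez : ((v (q : ℕ) : ℤ) * Nat.gcdA (v (q : ℕ)) (c q)
          + (c q : ℤ) * Nat.gcdB (v (q : ℕ)) (c q)) = 1 := by
        rw [← Nat.gcd_eq_gcd_ab, hcop q]
        norm_num
      have hmz : QuotientGroup.mk' (normGroup E ↥(R ⊓ Mp (q : ℕ))) (z q)
          = (QuotientGroup.mk (xp q) : Eˣ ⧸ normGroup E ↥(R ⊓ Mp (q : ℕ)))
            ^ (Nat.gcdB (v (q : ℕ)) (c q) * (c q : ℤ)) := by
        simp [z, map_zpow]
      rw [hmz]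
      set g : Eˣ ⧸ normGroup E ↥(R ⊓ Mp (q : ℕ)) := QuotientGroup.mk (xp q) with hg
      have hgv : g ^ ((v (q : ℕ) : ℕ) : ℤ) = 1 := hone q (xp q)
      have h1 : (Nat.gcdB (v (q : ℕ)) (c q) * (c q : ℤ)
          + (v (q : ℕ) : ℤ) * Nat.gcdA (v (q : ℕ)) (c q)) = 1 := by linarith [hbez]
      have key2 : g ^ (Nat.gcdB (v (q : ℕ)) (c q) * (c q : ℤ))
          * (g ^ ((v (q : ℕ) : ℕ) : ℤ)) ^ Nat.gcdA (v (q : ℕ)) (c q) = g :=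
        calc g ^ (Nat.gcdB (v (q : ℕ)) (c q) * (c q : ℤ))
            * (g ^ ((v (q : ℕ) : ℕ) : ℤ)) ^ Nat.gcdA (v (q : ℕ)) (c q)
            = g ^ (Nat.gcdB (v (q : ℕ)) (c q) * (c q : ℤ))
              * g ^ (((v (q : ℕ) : ℕ) : ℤ) * Nat.gcdA (v (q : ℕ)) (c q)) := by
              exact congrArg (g ^ (Nat.gcdB (v (q : ℕ)) (c q) * (c q : ℤ)) * ·)
                (zpow_mul g _ _).symm
          _ = g ^ (Nat.gcdB (v (q : ℕ)) (c q) * (c q : ℤ)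
              + ((v (q : ℕ) : ℕ) : ℤ) * Nat.gcdA (v (q : ℕ)) (c q)) := (zpow_add g _ _).symm
          _ = g ^ (1 : ℤ) := congrArg (g ^ ·) h1
          _ = g := zpow_one g
      have key3 : g ^ (Nat.gcdB (v (q : ℕ)) (c q) * (c q : ℤ)) = g := by
        rw [hgv] at key2
        calc g ^ (Nat.gcdB (v (q : ℕ)) (c q) * (c q : ℤ))
            = g ^ (Nat.gcdB (v (q : ℕ)) (c q) * (c q : ℤ))
              * (1 : Eˣ ⧸ normGroup E ↥(R ⊓ Mp (q : ℕ))) ^ Nat.gcdA (v (q : ℕ)) (c q) := by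
              exact ((congrArg (g ^ (Nat.gcdB (v (q : ℕ)) (c q) * (c q : ℤ)) * ·)
                (one_zpow (Nat.gcdA (v (q : ℕ)) (c q)))).trans
                (mul_one (g ^ (Nat.gcdB (v (q : ℕ)) (c q) * (c q : ℤ))))).symm
          _ = g := key2
      rw [key3, hg]
      exact QuotientGroup.out_eq' (f q)
    · -- off-diagonal terms
      intro p _ hpq
      have hmem : (q : ℕ) ∈ S.erase (p : ℕ) := by
        refine Finset.mem_erase.mpr ⟨?_, q.2⟩
        intro hqp
        exact hpq (Subtype.ext hqp.symm ▸ rfl)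
      obtain ⟨t, ht⟩ := Finset.dvd_prod_of_mem v hmem
      have htc : c p = v (q : ℕ) * t := ht
      have hexp : (Nat.gcdB (v (p : ℕ)) (c p) * (c p : ℤ))
          = ((v (q : ℕ) : ℕ) : ℤ) * (Nat.gcdB (v (p : ℕ)) (c p) * (t : ℤ)) := by
        rw [htc]
        push_cast
        ring
      have hmz : QuotientGroup.mk' (normGroup E ↥(R ⊓ Mp (q : ℕ))) (z p)
          = (QuotientGroup.mk (xp p) : Eˣ ⧸ normGroup E ↥(R ⊓ Mp (q : ℕ)))
            ^ (Nat.gcdB (v (p : ℕ)) (c p) * (c p : ℤ)) := by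
        simp [z, map_zpow]
      rw [hmz, hexp]
      calc (QuotientGroup.mk (xp p) : Eˣ ⧸ normGroup E ↥(R ⊓ Mp (q : ℕ)))
            ^ (((v (q : ℕ) : ℕ) : ℤ) * (Nat.gcdB (v (p : ℕ)) (c p) * (t : ℤ)))
          = ((QuotientGroup.mk (xp p) : Eˣ ⧸ normGroup E ↥(R ⊓ Mp (q : ℕ)))
            ^ ((v (q : ℕ) : ℕ) : ℤ)) ^ (Nat.gcdB (v (p : ℕ)) (c p) * (t : ℤ)) :=
            zpow_mul (QuotientGroup.mk (xp p) : Eˣ ⧸ normGroup E ↥(R ⊓ Mp (q : ℕ)))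
              ((v (q : ℕ) : ℕ) : ℤ) (Nat.gcdB (v (p : ℕ)) (c p) * (t : ℤ))
        _ = (1 : Eˣ ⧸ normGroup E ↥(R ⊓ Mp (q : ℕ)))
            ^ (Nat.gcdB (v (p : ℕ)) (c p) * (t : ℤ)) := by rw [hone q (xp p)]
        _ = 1 := one_zpow _
  have e1 := QuotientGroup.quotientKerEquivOfSurjective (H := (p : S) → Eˣ ⧸ normGroup E ↥(R ⊓ Mp p)) φ hsurj
  have e2 := QuotientGroup.quotientMulEquivOfEq hker.symm
  exact ⟨e2.trans e1⟩
end

section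
/- Let P be a finite nonabelian p-group all of whose proper subgroups are abelian (a Miller–Moreno p-group). Then the commutator subgroup [P,P] has order p, the center Z(P) equals the Frattini subgroup Φ(P), and P/Φ(P) is elementary abelian of order p². -/
open Subgroup QuotientGroup
open scoped commutatorElement

section Aux

variable {G : Type*} [Group G]

lemma MM.mem_frattini_iff {x : G} :
    x ∈ frattini G ↔ ∀ M : Subgroup G, IsCoatom M → x ∈ M := by
  simp [frattini, Order.radical, Subgroup.mem_iInf, Set.mem_setOf_eq]

lemma MM.closure_pair_comm {a b : G} (hab : Commute a b) :
    ∀ x ∈ Subgroup.closure {a, b}, ∀ y ∈ Subgroup.closure {a, b}, Commute x y := by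
  intro x hx y hy
  induction hx, hy using Subgroup.closure_induction₂ with
  | mem x y hx hy =>
    rcases hx with rfl | rfl <;> rcases hy with rfl | rfl
    · exact Commute.refl _
    · exact hab
    · exact hab.symm
    · exact Commute.refl _
  | one_left x hx => exact Commute.one_left x
  | one_right x hx => exact Commute.one_right x
  | mul_left x y z _ _ _ h1 h2 => exact h1.mul_left h2
  | mul_right y z x _ _ _ h1 h2 => exact h1.mul_right h2
  | inv_left x y _ _ h => exact h.inv_left
  | inv_right x y _ _ h => exact h.inv_right

lemma MM.zpow_eq_pow_val {g : G} {p : ℕ} [NeZero p] (hg : g ^ p = 1) (m : ℤ) :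
    g ^ m = g ^ ((m : ZMod p).val) := by
  have h1 : g ^ (p : ℤ) = 1 := by rw [zpow_natCast, hg]
  calc g ^ m = g ^ ((p : ℤ) * (m / p) + m % p) := by rw [Int.mul_ediv_add_emod]
    _ = (g ^ (p : ℤ)) ^ (m / p) * g ^ (m % p) := by rw [zpow_add, zpow_mul]
    _ = g ^ (m % p) := by rw [h1, one_zpow, one_mul]
    _ = g ^ ((m : ZMod p).val) := by
        rw [← zpow_natCast]
        congr 1
        rw [ZMod.val_intCast]

lemma MM.comm_mul_left (x y z : G) : ⁅x * y, z⁆ = x * ⁅y, z⁆ * x⁻¹ * ⁅x, z⁆ := by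
  simp only [commutatorElement_def]
  group

end Aux

theorem stmt_6 {P : Type*} [Group P] [Finite P] (p : ℕ) (hp : p.Prime)
    (hpgrp : IsPGroup p P)
    (hna : ¬ ∀ a b : P, a * b = b * a)
    (hprop : ∀ H : Subgroup P, H ≠ ⊤ → ∀ a b : H, a * b = b * a) :
    Nat.card (commutator P) = p ∧
    Subgroup.center P = frattini P ∧
    Nat.card (P ⧸ frattini P) = p ^ 2 ∧
    (∀ x : P ⧸ frattini P, x ^ p = 1) ∧
    (∀ x y : P ⧸ frattini P, x * y = y * x) := by
  haveI : Fact p.Prime := ⟨hp⟩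
  haveI : NeZero p := ⟨hp.ne_zero⟩
  push_neg at hna
  obtain ⟨a, b, hab⟩ := hna
  have hcomm : ∀ (H : Subgroup P), H ≠ ⊤ → ∀ x ∈ H, ∀ y ∈ H, x * y = y * x := by
    intro H hH x hx y hy
    have := hprop H hH ⟨x, hx⟩ ⟨y, hy⟩
    simpa [Subtype.ext_iff] using this
  -- a and b generate P
  have htop : Subgroup.closure {a, b} = ⊤ := by
    by_contra h
    exact hab (hcomm _ h a (subset_closure (by simp)) b (subset_closure (by simp)))
  -- P is not cyclic
  have hnotcyc : ∀ g : P, zpowers g ≠ ⊤ := by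
    intro g hg
    have ha : a ∈ zpowers g := hg ▸ mem_top a
    have hb : b ∈ zpowers g := hg ▸ mem_top b
    obtain ⟨m, rfl⟩ := ha
    obtain ⟨n, rfl⟩ := hb
    exact hab (((Commute.refl g).zpow_zpow m n))
  -- maximal subgroups are normal
  haveI hnil : Group.IsNilpotent P := hpgrp.isNilpotent
  have hMnormal : ∀ M : Subgroup P, IsCoatom M → M.Normal :=
    ((isNilpotent_of_finite_tfae (G := P)).out 0 2).mp hnil
  -- quotients by maximal subgroups have order p
  have hMcard : ∀ M : Subgroup P, IsCoatom M → Nat.card (P ⧸ M) = p := by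
    intro M hM
    haveI := hMnormal M hM
    have hq : IsPGroup p (P ⧸ M) := hpgrp.to_quotient M
    obtain ⟨x, hx⟩ : ∃ x : P, x ∉ M := by
      by_contra h
      push_neg at h
      exact hM.1 ((Subgroup.eq_top_iff' M).mpr h)
    haveI : Nontrivial (P ⧸ M) := by
      refine ⟨⟨QuotientGroup.mk x, 1, ?_⟩⟩
      rw [ne_eq, QuotientGroup.eq_one_iff]
      exact hx
    obtain ⟨n, hn⟩ := IsPGroup.iff_card.mp hq
    have hdvd : p ∣ Nat.card (P ⧸ M) := by
      rw [hn]
      refine dvd_pow_self p ?_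
      rintro rfl
      rw [pow_zero] at hn
      exact Finite.one_lt_card.ne' hn
    haveI : Fintype (P ⧸ M) := Fintype.ofFinite _
    rw [Nat.card_eq_fintype_card] at hdvd
    obtain ⟨g, hg⟩ := exists_prime_orderOf_dvd_card p hdvd
    have hg1 : g ≠ 1 := by
      intro h
      rw [h, orderOf_one] at hg
      exact hp.one_lt.ne' hg.symm
    have hle : M ≤ Subgroup.comap (QuotientGroup.mk' M) (zpowers g) := by
      intro m hm
      rw [Subgroup.mem_comap]
      have : QuotientGroup.mk' M m = 1 := (QuotientGroup.eq_one_iff m).mpr hm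
      rw [this]
      exact one_mem _
    obtain ⟨y, hy⟩ := QuotientGroup.mk'_surjective M g
    have hlt : M < Subgroup.comap (QuotientGroup.mk' M) (zpowers g) := by
      refine lt_of_le_of_ne hle fun h => ?_
      have hy' : y ∈ Subgroup.comap (QuotientGroup.mk' M) (zpowers g) := by
        rw [Subgroup.mem_comap, hy]
        exact mem_zpowers g
      rw [← h] at hy'
      exact hg1 (by rw [← hy]; exact (QuotientGroup.eq_one_iff y).mpr hy')
    have hcomap := hM.2 _ hlt
    have hzg : zpowers g = ⊤ := by
      rw [eq_top_iff]
      calc (⊤ : Subgroup (P ⧸ M)) =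
          Subgroup.map (QuotientGroup.mk' M) (Subgroup.comap (QuotientGroup.mk' M) (zpowers g)) :=
            by rw [hcomap, Subgroup.map_top_of_surjective _ (QuotientGroup.mk'_surjective M)]
        _ ≤ zpowers g := Subgroup.map_comap_le _ _
    calc Nat.card (P ⧸ M) = Nat.card (⊤ : Subgroup (P ⧸ M)) := (Subgroup.card_top).symm
      _ = Nat.card (zpowers g) := by rw [hzg]
      _ = orderOf g := Nat.card_zpowers g
      _ = p := hg
  -- p-th powers and commutators lie in every maximal subgroup
  have hpow_mem : ∀ (x : P) (M : Subgroup P), IsCoatom M → x ^ p ∈ M := by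
    intro x M hM
    haveI := hMnormal M hM
    have : ((QuotientGroup.mk' M) x) ^ p = 1 := by
      rw [← hMcard M hM]
      exact pow_card_eq_one'
    rw [← map_pow] at this
    exact (QuotientGroup.eq_one_iff _).mp this
  have hcomm_mem : ∀ (x y : P) (M : Subgroup P), IsCoatom M → ⁅x, y⁆ ∈ M := by
    intro x y M hM
    haveI := hMnormal M hM
    haveI : IsCyclic (P ⧸ M) := isCyclic_of_prime_card (hMcard M hM)
    letI : CommGroup (P ⧸ M) := IsCyclic.commGroup
    have h1 : (QuotientGroup.mk' M) ⁅x, y⁆ = 1 := by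
      rw [map_commutatorElement]
      exact commutatorElement_eq_one_iff_mul_comm.mpr (mul_comm _ _)
    exact (QuotientGroup.eq_one_iff _).mp h1
  have hfr_pow : ∀ x : P, x ^ p ∈ frattini P :=
    fun x => MM.mem_frattini_iff.mpr fun M hM => hpow_mem x M hM
  have hfr_comm : ∀ x y : P, ⁅x, y⁆ ∈ frattini P :=
    fun x y => MM.mem_frattini_iff.mpr fun M hM => hcomm_mem x y M hM
  -- center = frattini
  have hZF : Subgroup.center P = frattini P := by
    apply le_antisymm
    · intro z hz
      refine MM.mem_frattini_iff.mpr fun M hM => ?_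
      by_contra hzM
      have hlt : M < M ⊔ zpowers z :=
        left_lt_sup.mpr fun h => hzM (h (mem_zpowers z))
      have htop' := hM.2 _ hlt
      haveI hznorm : (zpowers z).Normal := by
        constructor
        intro n hn g
        have hnc : n ∈ Subgroup.center P := (zpowers_le.mpr hz) hn
        have : g * n = n * g := Subgroup.mem_center_iff.mp hnc g
        have h2 : g * n * g⁻¹ = n := by rw [this]; group
        rw [h2]; exact hn
      have ha' : a ∈ (↑(M ⊔ zpowers z) : Set P) := by rw [htop']; trivial
      have hb' : b ∈ (↑(M ⊔ zpowers z) : Set P) := by rw [htop']; trivial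
      rw [Subgroup.mul_normal M (zpowers z)] at ha' hb'
      obtain ⟨m1, hm1, z1, hz1, rfl⟩ := ha'
      obtain ⟨m2, hm2, z2, hz2, rfl⟩ := hb'
      have hz1c : z1 ∈ Subgroup.center P := (zpowers_le.mpr hz) hz1
      have hz2c : z2 ∈ Subgroup.center P := (zpowers_le.mpr hz) hz2
      have hm : m1 * m2 = m2 * m1 := hcomm M hM.1 m1 hm1 m2 hm2
      have h1 : z1 * m2 = m2 * z1 := (Subgroup.mem_center_iff.mp hz1c m2).symm
      have h2 : z1 * z2 = z2 * z1 := Subgroup.mem_center_iff.mp hz2c z1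
      have h3 : m1 * z2 = z2 * m1 := Subgroup.mem_center_iff.mp hz2c m1
      apply hab
      calc m1 * z1 * (m2 * z2) = m1 * (z1 * m2) * z2 := by group
        _ = m1 * (m2 * z1) * z2 := by rw [h1]
        _ = (m1 * m2) * (z1 * z2) := by group
        _ = (m2 * m1) * (z2 * z1) := by rw [hm, h2]
        _ = m2 * (m1 * z2) * z1 := by group
        _ = m2 * (z2 * m1) * z1 := by rw [h3]
        _ = m2 * z2 * (m1 * z1) := by group
    · intro x hx
      rw [Subgroup.mem_center_iff]
      intro g
      have hg : zpowers g ≠ ⊤ := hnotcyc g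
      obtain ⟨M, hM, hle⟩ := (eq_top_or_exists_le_coatom (zpowers g)).resolve_left hg
      exact hcomm M hM.1 g (hle (mem_zpowers g)) x (MM.mem_frattini_iff.mp hx M hM)
  -- quotient facts
  have hQpow : ∀ x : P ⧸ frattini P, x ^ p = 1 := by
    intro x
    obtain ⟨y, rfl⟩ := QuotientGroup.mk'_surjective (frattini P) x
    rw [← map_pow]
    exact (QuotientGroup.eq_one_iff _).mpr (hfr_pow y)
  have hQab : ∀ x y : P ⧸ frattini P, x * y = y * x := by
    intro x y
    obtain ⟨x, rfl⟩ := QuotientGroup.mk'_surjective (frattini P) x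
    obtain ⟨y, rfl⟩ := QuotientGroup.mk'_surjective (frattini P) y
    rw [← commutatorElement_eq_one_iff_mul_comm, ← map_commutatorElement]
    exact (QuotientGroup.eq_one_iff _).mpr (hfr_comm x y)
  -- the generators of the quotient
  have hgenQ : ∀ (N : Subgroup P) [N.Normal],
      Subgroup.closure {(QuotientGroup.mk' N) a, (QuotientGroup.mk' N) b} = ⊤ := by
    intro N _
    have := MonoidHom.map_closure (QuotientGroup.mk' N) {a, b}
    rw [htop, Subgroup.map_top_of_surjective _ (QuotientGroup.mk'_surjective N)] at this
    rw [this]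
    congr 1
    rw [Set.image_insert_eq, Set.image_singleton]
  -- card (P / frattini P) = p ^ 2
  have hQp : IsPGroup p (P ⧸ frattini P) := hpgrp.to_quotient _
  obtain ⟨n, hcard⟩ := IsPGroup.iff_card.mp hQp
  have hcardle : Nat.card (P ⧸ frattini P) ≤ p ^ 2 := by
    letI : CommGroup (P ⧸ frattini P) :=
      { (inferInstance : Group (P ⧸ frattini P)) with mul_comm := hQab }
    set A : P ⧸ frattini P := (QuotientGroup.mk' (frattini P)) a with hA
    set B : P ⧸ frattini P := (QuotientGroup.mk' (frattini P)) b with hB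
    have hsurj : Function.Surjective
        (fun ij : ZMod p × ZMod p => A ^ (ij.1.val) * B ^ (ij.2.val)) := by
      intro q
      have hq : q ∈ zpowers A ⊔ zpowers B := by
        have hle : Subgroup.closure {A, B} ≤ zpowers A ⊔ zpowers B := by
          rw [Subgroup.closure_le]
          rintro x (rfl | rfl)
          · exact le_sup_left (α := Subgroup _) (mem_zpowers A)
          · exact le_sup_right (α := Subgroup _) (mem_zpowers B)
        exact hle ((hgenQ (frattini P)) ▸ mem_top q)
      rw [Subgroup.mem_sup] at hq
      obtain ⟨u, hu, v, hv, rfl⟩ := hq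
      obtain ⟨m, rfl⟩ := hu
      obtain ⟨k, rfl⟩ := hv
      exact ⟨((m : ZMod p), (k : ZMod p)), by
        simp only []
        rw [← MM.zpow_eq_pow_val (hQpow A) m, ← MM.zpow_eq_pow_val (hQpow B) k]⟩
    calc Nat.card (P ⧸ frattini P) ≤ Nat.card (ZMod p × ZMod p) :=
          Nat.card_le_card_of_surjective _ hsurj
      _ = p ^ 2 := by rw [Nat.card_prod, Nat.card_zmod, sq]
  have hn2 : 2 ≤ n := by
    by_contra h
    push_neg at h
    have hcyc : IsCyclic (P ⧸ frattini P) := by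
      interval_cases n
      · have : Nat.card (P ⧸ frattini P) = 1 := by rw [hcard, pow_zero]
        haveI : Subsingleton (P ⧸ frattini P) := Nat.card_eq_one_iff_unique.mp this |>.1
        infer_instance
      · exact isCyclic_of_prime_card (by rw [hcard, pow_one])
    obtain ⟨g, hgg⟩ := hcyc.exists_generator
    obtain ⟨y, rfl⟩ := QuotientGroup.mk'_surjective (frattini P) g
    have hmap : Subgroup.map (QuotientGroup.mk' (frattini P)) (zpowers y ⊔ frattini P) = ⊤ := by
      rw [eq_top_iff]
      intro q _
      obtain ⟨m, rfl⟩ := hgg q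
      exact ⟨y ^ m, le_sup_left (α := Subgroup P) (zpow_mem (mem_zpowers y) m), by
        rw [map_zpow]⟩
    have hK : zpowers y ⊔ frattini P = ⊤ := by
      have := Subgroup.comap_map_eq (QuotientGroup.mk' (frattini P)) (zpowers y ⊔ frattini P)
      rw [hmap, Subgroup.comap_top, QuotientGroup.ker_mk'] at this
      rw [sup_assoc, sup_idem] at this
      exact this.symm
    exact hnotcyc y (frattini_nongenerating hK)
  have hcardQ : Nat.card (P ⧸ frattini P) = p ^ 2 := by
    rw [hcard]
    congr 1
    have : p ^ n ≤ p ^ 2 := hcard ▸ hcardle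
    have hle2 : n ≤ 2 := (Nat.pow_le_pow_iff_right hp.one_lt).mp this
    omega
  -- commutator subgroup
  set c : P := ⁅a, b⁆ with hc
  have hc1 : c ≠ 1 := fun h => hab (commutatorElement_eq_one_iff_mul_comm.mp h)
  have hcZ : c ∈ Subgroup.center P := by rw [hZF]; exact hfr_comm a b
  haveI hzcnorm : (zpowers c).Normal := by
    constructor
    intro m hm g
    have hmc : m ∈ Subgroup.center P := (zpowers_le.mpr hcZ) hm
    have : g * m = m * g := Subgroup.mem_center_iff.mp hmc g
    have h2 : g * m * g⁻¹ = m := by rw [this]; group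
    rw [h2]; exact hm
  have hsub : commutator P ≤ zpowers c := by
    rw [_root_.commutator_def, Subgroup.commutator_le]
    intro x _ y _
    have hABcomm : Commute ((QuotientGroup.mk' (zpowers c)) a)
        ((QuotientGroup.mk' (zpowers c)) b) := by
      rw [Commute, SemiconjBy, ← commutatorElement_eq_one_iff_mul_comm, ← map_commutatorElement]
      exact (QuotientGroup.eq_one_iff _).mpr (mem_zpowers c)
    have hall : ∀ u v : P ⧸ zpowers c, Commute u v := by
      intro u v
      refine MM.closure_pair_comm hABcomm u ?_ v ?_ <;>
        · rw [hgenQ (zpowers c)]; trivial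
    have : (QuotientGroup.mk' (zpowers c)) ⁅x, y⁆ = 1 := by
      rw [map_commutatorElement]
      exact commutatorElement_eq_one_iff_commute.mpr (hall _ _)
    exact (QuotientGroup.eq_one_iff _).mp this
  have hsup : zpowers c ≤ commutator P := by
    rw [zpowers_le, _root_.commutator_def]
    exact Subgroup.commutator_mem_commutator (mem_top a) (mem_top b)
  have hceq : commutator P = zpowers c := le_antisymm hsub hsup
  have hap : a ^ p ∈ Subgroup.center P := by rw [hZF]; exact hfr_pow a
  have hpowid : ∀ k : ℕ, ⁅a ^ k, b⁆ = c ^ k := by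
    intro k
    induction k with
    | zero => simp
    | succ k ih =>
      have hck : c ^ k ∈ Subgroup.center P := pow_mem hcZ k
      calc ⁅a ^ (k + 1), b⁆ = ⁅a * a ^ k, b⁆ := by rw [pow_succ']
        _ = a * ⁅a ^ k, b⁆ * a⁻¹ * ⁅a, b⁆ := MM.comm_mul_left a (a ^ k) b
        _ = a * c ^ k * a⁻¹ * c := by rw [ih]
        _ = c ^ k * c := by
            rw [Subgroup.mem_center_iff.mp hck a]
            group
        _ = c ^ (k + 1) := by rw [pow_succ]
  have hcp : c ^ p = 1 := by
    rw [← hpowid p]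
    exact commutatorElement_eq_one_iff_mul_comm.mpr
      (Subgroup.mem_center_iff.mp hap b).symm
  have horder : orderOf c = p := orderOf_eq_prime hcp hc1
  have hcardC : Nat.card (commutator P) = p := by
    rw [hceq, Nat.card_zpowers, horder]
  exact ⟨hcardC, hZF, hcardQ, hQpow, hQab⟩
end

section
/- Let P be a finite nonabelian p-group all of whose proper subgroups are abelian. Then a subgroup H of P is normal in P if and only if [P,P] ⊆ H or H ⊆ Φ(P). -/
open Subgroup
open scoped commutatorElement

theorem stmt_7 {P : Type*} [Group P] [Finite P] (p : ℕ) (hp : p.Prime)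
    (hpgrp : IsPGroup p P)
    (hna : ¬ ∀ a b : P, a * b = b * a)
    (hprop : ∀ H : Subgroup P, H ≠ ⊤ → ∀ a b : H, a * b = b * a)
    (H : Subgroup P) :
    H.Normal ↔ commutator P ≤ H ∨ H ≤ frattini P := by
  -- proper subgroups are abelian, stated elementwise in P
  have comm : ∀ (K : Subgroup P), K ≠ ⊤ → ∀ a ∈ K, ∀ b ∈ K, a * b = b * a := by
    intro K hK a ha b hb
    have := hprop K hK ⟨a, ha⟩ ⟨b, hb⟩
    exact congrArg Subtype.val this
  constructor
  · intro hN
    by_cases hΦ : H ≤ frattini P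
    · exact Or.inr hΦ
    · left
      obtain ⟨x, hxH, hxΦ⟩ := SetLike.not_le_iff_exists.mp hΦ
      -- find a maximal subgroup M not containing x
      have hM : ∃ M : Subgroup P, IsCoatom M ∧ x ∉ M := by
        by_contra hc
        push_neg at hc
        apply hxΦ
        rw [frattini, Order.radical]
        simp only [Subgroup.mem_iInf, Set.mem_setOf_eq]
        exact fun M hMco => hc M hMco
      obtain ⟨M, hMco, hxM⟩ := hM
      -- M ⊔ ⟨x⟩ = ⊤
      have hsup : M ⊔ Subgroup.closure {x} = ⊤ := by
        apply hMco.2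
        refine lt_of_le_of_ne le_sup_left (fun h => hxM ?_)
        have : x ∈ M ⊔ Subgroup.closure {x} :=
          SetLike.le_def.mp le_sup_right (Subgroup.mem_closure_singleton_self x)
        rwa [← h] at this
      -- quotient by H is a quotient of M, hence abelian
      let π : P →* P ⧸ H := QuotientGroup.mk' H
      have hπx : π x = 1 := (QuotientGroup.eq_one_iff x).mpr hxH
      have hmap : (⊤ : Subgroup P).map π = M.map π := by
        rw [← hsup, Subgroup.map_sup, MonoidHom.map_closure]
        have : π '' {x} = {(1 : P ⧸ H)} := by rw [Set.image_singleton, hπx]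
        rw [this, Subgroup.closure_singleton_one, sup_bot_eq]
      have hall : ∀ q : P ⧸ H, q ∈ M.map π := by
        intro q
        obtain ⟨g, hg⟩ := QuotientGroup.mk'_surjective H q
        rw [← hmap]
        exact ⟨g, Subgroup.mem_top g, hg⟩
      rw [commutator_def, Subgroup.commutator_le]
      intro g₁ _ g₂ _
      obtain ⟨m₁, hm₁, hpm₁⟩ := hall (π g₁)
      obtain ⟨m₂, hm₂, hpm₂⟩ := hall (π g₂)
      have h12 : ⁅m₁, m₂⁆ = 1 :=
        commutatorElement_eq_one_iff_mul_comm.mpr (comm M hMco.1 m₁ hm₁ m₂ hm₂)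
      have : π ⁅g₁, g₂⁆ = 1 := by
        rw [map_commutatorElement, ← hpm₁, ← hpm₂, ← map_commutatorElement, h12, map_one]
      exact (QuotientGroup.eq_one_iff _).mp this
  · rintro (hcomm | hΦ)
    · constructor
      intro n hn g
      have key : g * n * g⁻¹ = n * ⁅n⁻¹, g⁆ := by group
      rw [key]
      exact mul_mem hn (hcomm (commutator_mem_commutator (Subgroup.mem_top _) (Subgroup.mem_top _)))
    · -- frattini ≤ center
      push_neg at hna
      obtain ⟨a, b, hab⟩ := hna
      set Ca := Subgroup.centralizer {a} with hCa
      set Cb := Subgroup.centralizer {b} with hCb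
      have haCa : a ∈ Ca := Subgroup.mem_centralizer_singleton_iff.mpr rfl
      have hbCb : b ∈ Cb := Subgroup.mem_centralizer_singleton_iff.mpr rfl
      have hbCa : b ∉ Ca := fun h => hab ((Subgroup.mem_centralizer_singleton_iff.mp h).symm)
      have hCane : Ca ≠ ⊤ := fun h => hbCa (h ▸ Subgroup.mem_top b)
      have hCbne : Cb ≠ ⊤ := by
        intro h
        have ha : a ∈ Cb := h ▸ Subgroup.mem_top a
        exact hab (Subgroup.mem_centralizer_singleton_iff.mp ha)
      have hcoatom : ∀ (c : P) (C : Subgroup P), c ∈ C → C = Subgroup.centralizer {c} →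
          C ≠ ⊤ → IsCoatom C := by
        intro c C hc hCdef hCne
        refine ⟨hCne, fun K hK => ?_⟩
        by_contra hKne
        have hKC : K ≤ C := by
          intro k hk
          rw [hCdef, Subgroup.mem_centralizer_singleton_iff]
          exact comm K hKne k hk c (hK.le hc)
        exact absurd hKC (not_le_of_gt hK)
      have hCaco := hcoatom a Ca haCa rfl hCane
      have hCbco := hcoatom b Cb hbCb rfl hCbne
      have hsup : Ca ⊔ Cb = ⊤ := by
        apply hCaco.2
        refine lt_of_le_of_ne le_sup_left (fun h => hbCa ?_)
        have : b ∈ Ca ⊔ Cb := SetLike.le_def.mp le_sup_right hbCb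
        rwa [← h] at this
      have hZ : frattini P ≤ Subgroup.center P := by
        intro z hz
        have hzCa : z ∈ Ca := frattini_le_coatom hCaco hz
        have hzCb : z ∈ Cb := frattini_le_coatom hCbco hz
        rw [Subgroup.mem_center_iff]
        intro g
        have hg : g ∈ Subgroup.centralizer {z} := by
          have hle : Ca ⊔ Cb ≤ Subgroup.centralizer {z} := by
            refine sup_le ?_ ?_
            · intro c hc
              rw [Subgroup.mem_centralizer_singleton_iff]
              exact comm Ca hCane c hc z hzCa
            · intro c hc
              rw [Subgroup.mem_centralizer_singleton_iff]
              exact comm Cb hCbne c hc z hzCb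
          exact hle (hsup ▸ Subgroup.mem_top g)
        exact Subgroup.mem_centralizer_singleton_iff.mp hg
      constructor
      intro n hn g
      have hnZ : n ∈ Subgroup.center P := hZ (hΦ hn)
      have : g * n * g⁻¹ = n := by
        rw [(Subgroup.mem_center_iff.mp hnZ g), mul_assoc, mul_inv_cancel, mul_one]
      rwa [this]
end

section
/- Let P be a finite nonabelian p-group all of whose proper subgroups are abelian, and suppose P is not isomorphic to the quaternion group of order 8. Then P possesses a subgroup P₀ that is not normal in P. -/
open Subgroup

private lemma bezout' (p : ℕ) (hp : p.Prime) (w : ℤ) (hw : ¬ (p:ℤ) ∣ w) :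
    ∃ z t : ℤ, w * z + (p:ℤ) * t = 1 := by
  have h1 : ¬ p ∣ w.natAbs := by
    intro h
    apply hw
    have h2 := Int.natCast_dvd_natCast.mpr h
    exact (Int.dvd_natAbs).mp h2

  have h2 : Nat.Coprime p w.natAbs := (Nat.Prime.coprime_iff_not_dvd hp).mpr h1
  have h3 : IsCoprime w (p:ℤ) := by
    rw [Int.isCoprime_iff_gcd_eq_one]
    rw [Int.gcd]
    simpa [Nat.coprime_comm] using h2
  obtain ⟨z, t, h⟩ := h3
  exact ⟨z, t, by linarith⟩

private lemma pow_formula {P : Type*} [Group P] {b g c : P}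
    (hgb : g * b = b * (g * c)) (hcb : Commute c b) (hcg : Commute c g) :
    ∀ k : ℕ, (b * g) ^ k = b ^ k * g ^ k * c ^ (k.choose 2) := by
  have hgbk : ∀ k : ℕ, g ^ k * b = b * (g ^ k * c ^ k) := by
    intro k
    induction k with
    | zero => simp
    | succ k ih =>
      have hck : c ^ k * (g * c) = g * (c ^ k * c) := by
        rw [← mul_assoc, (hcg.pow_left k).eq, mul_assoc]
      calc g ^ (k+1) * b = g ^ k * (g * b) := by rw [pow_succ, mul_assoc]
        _ = g ^ k * (b * (g * c)) := by rw [hgb]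
        _ = (g ^ k * b) * (g * c) := by rw [mul_assoc]
        _ = b * (g ^ k * c ^ k) * (g * c) := by rw [ih]
        _ = b * (g ^ k * (c ^ k * (g * c))) := by rw [mul_assoc, mul_assoc]
        _ = b * (g ^ k * (g * (c ^ k * c))) := by rw [hck]
        _ = b * (g ^ (k+1) * c ^ (k+1)) := by
            rw [pow_succ, pow_succ]
            rw [← mul_assoc (g^k) g, mul_assoc]
  intro k
  induction k with
  | zero => simp
  | succ k ih =>
    have hchoose : (k+1).choose 2 = k.choose 2 + k := by
      rw [Nat.choose_succ_succ, Nat.choose_one_right, Nat.add_comm]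
    rw [pow_succ, ih, hchoose]
    calc b ^ k * g ^ k * c ^ k.choose 2 * (b * g)
        = b ^ k * (g ^ k * (c ^ k.choose 2 * b)) * g := by group
      _ = b ^ k * (g ^ k * (b * c ^ k.choose 2)) * g := by rw [(hcb.pow_left _).eq]
      _ = b ^ k * ((g ^ k * b) * c ^ k.choose 2) * g := by rw [mul_assoc (g^k)]
      _ = b ^ k * ((b * (g ^ k * c ^ k)) * c ^ k.choose 2) * g := by rw [hgbk]
      _ = b ^ (k+1) * (g ^ k * (c ^ k * c ^ k.choose 2) * g) := by
          rw [pow_succ]; group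
      _ = b ^ (k+1) * (g ^ k * (c ^ (k.choose 2 + k) * g)) := by
          rw [← pow_add, Nat.add_comm k _, mul_assoc]
          ring_nf
      _ = b ^ (k+1) * (g ^ k * (g * c ^ (k.choose 2 + k))) := by
          rw [(hcg.pow_left _).eq]
      _ = b ^ (k+1) * g ^ (k+1) * c ^ (k.choose 2 + k) := by
          rw [pow_succ]; group

private lemma aux {P : Type*} [Group P] [Finite P] (p : ℕ) (hp : p.Prime)
    (hpgrp : IsPGroup p P) (hnorm : ∀ H : Subgroup P, H.Normal)
    (a b : P) (hab : a * b ≠ b * a)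
    (hmin : ∀ x y : P, x * y ≠ y * x → orderOf a * orderOf b ≤ orderOf x * orderOf y)
    (hba : orderOf b ≤ orderOf a) :
    orderOf a = 4 ∧ b ^ 2 = a ^ 2 ∧ b * a * b⁻¹ = a⁻¹ := by
  haveI : Fact p.Prime := ⟨hp⟩
  have hp1 : 1 < p := hp.one_lt
  -- orders are powers of p
  have horder : ∀ x : P, ∃ k : ℕ, orderOf x = p ^ k := by
    intro x
    obtain ⟨k, hk⟩ := hpgrp x
    obtain ⟨k', _, h⟩ := (Nat.dvd_prime_pow hp).mp (orderOf_dvd_of_pow_eq_one hk)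
    exact ⟨k', h⟩
  obtain ⟨α, hα⟩ := horder a
  obtain ⟨β, hβ⟩ := horder b
  have ha1 : a ≠ 1 := by rintro rfl; simp at hab
  have hb1 : b ≠ 1 := by rintro rfl; simp at hab
  have hα1 : 1 ≤ α := by
    by_contra h
    push_neg at h
    interval_cases α
    · simp at hα
      exact ha1 hα
  have hβ1 : 1 ≤ β := by
    by_contra h
    push_neg at h
    interval_cases β
    · simp at hβ
      exact hb1 hβ
  have hβα : β ≤ α := by
    have := hba
    rw [hα, hβ] at this
    exact (Nat.pow_le_pow_iff_right hp1).mp this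
  -- conjugation exponents
  obtain ⟨m, hm⟩ : ∃ m : ℤ, a ^ m = b * a * b⁻¹ := by
    have h := (hnorm (zpowers a)).conj_mem a (mem_zpowers a) b
    exact mem_zpowers_iff.mp h
  obtain ⟨n, hn⟩ : ∃ n : ℤ, b ^ n = a * b * a⁻¹ := by
    have h := (hnorm (zpowers b)).conj_mem b (mem_zpowers b) a
    exact mem_zpowers_iff.mp h
  set c : P := a ^ (m - 1) with hc
  have hac : b * a * b⁻¹ = a * c := by
    rw [← hm, hc]
    have h0 : a ^ (1 + (m - 1)) = a ^ m := by congr 1; ring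
    rw [← h0, zpow_add, zpow_one]
  have hcb' : c = b ^ (1 - n) := by
    have h1 : c = (b * a * b⁻¹) * a⁻¹ := by
      rw [← hm, hc, zpow_sub, zpow_one]
    have h2 : a * b⁻¹ * a⁻¹ = b ^ (-n) := by
      rw [zpow_neg, hn]
      group
    calc c = b * (a * b⁻¹ * a⁻¹) := by rw [h1]; group
      _ = b ^ (1:ℤ) * b ^ (-n) := by rw [h2]; try rw [zpow_one]
      _ = b ^ (1 - n) := by rw [sub_eq_add_neg, ← zpow_add]
  have hcne : c ≠ 1 := by
    intro h
    rw [h, mul_one] at hac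
    apply hab
    have h6 : b * a = (b * a * b⁻¹) * b := by group
    rw [h6, hac]
  have hca : Commute a c := (Commute.refl a).zpow_right (m - 1)
  have hcbb : Commute b c := by rw [hcb']; exact (Commute.refl b).zpow_right (1 - n)
  -- conjugation formulas
  have hconj_a : ∀ j : ℤ, b * a ^ j * b⁻¹ = a ^ j * c ^ j := by
    intro j
    calc b * a ^ j * b⁻¹ = (b * a * b⁻¹) ^ j := conj_zpow.symm
      _ = (a * c) ^ j := by rw [hac]
      _ = a ^ j * c ^ j := hca.mul_zpow j
  have hconj_a' : ∀ j : ℤ, b⁻¹ * a ^ j * b = a ^ j * c ^ (-j) := by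
    intro j
    have h1 := hconj_a j
    have h2 : b⁻¹ * a ^ j * b * c ^ j = a ^ j := by
      have h3 : b⁻¹ * (b * a ^ j * b⁻¹) * b = a ^ j := by group
      rw [h1] at h3
      calc b⁻¹ * a ^ j * b * c ^ j
          = b⁻¹ * a ^ j * (b * c ^ j) := by rw [mul_assoc]
        _ = b⁻¹ * a ^ j * (c ^ j * b) := by rw [← (hcbb.symm.zpow_left j).eq]
        _ = b⁻¹ * (a ^ j * c ^ j) * b := by group
        _ = a ^ j := h3
    calc b⁻¹ * a ^ j * b = (b⁻¹ * a ^ j * b * c ^ j) * c ^ (-j) := by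
          rw [mul_assoc (b⁻¹ * a ^ j * b), ← zpow_add]
          norm_num
      _ = a ^ j * c ^ (-j) := by rw [h2]
  -- order of c is p
  have hcp : c ^ ((p:ℕ):ℤ) = 1 := by
    by_contra hcpne
    have hnc : a ^ (p:ℕ) * b ≠ b * a ^ (p:ℕ) := by
      intro h
      apply hcpne
      have h1 := hconj_a ((p:ℕ):ℤ)
      have h2 : b * a ^ ((p:ℕ):ℤ) * b⁻¹ = a ^ ((p:ℕ):ℤ) := by
        rw [zpow_natCast, ← h]
        group
      rw [h2] at h1
      have h3 : a ^ ((p:ℕ):ℤ) * (1:P) = a ^ ((p:ℕ):ℤ) * c ^ ((p:ℕ):ℤ) := by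
        rw [mul_one, ← h1]
      exact (mul_left_cancel h3).symm
    have hmm := hmin (a ^ (p:ℕ)) b hnc
    have hop : orderOf (a ^ (p:ℕ)) = p ^ (α - 1) := by
      rw [orderOf_pow, hα]
      have hg : Nat.gcd (p ^ α) p = p := Nat.gcd_eq_right (dvd_pow_self p (by omega))
      rw [hg]
      have h5 : p ^ α = p ^ (α - 1) * p := by rw [← pow_succ]; congr 1; omega
      rw [h5, Nat.mul_div_cancel _ (by omega)]
    rw [hop, hβ, hα] at hmm
    have h6 : p ^ (α-1) < p ^ α := Nat.pow_lt_pow_right hp1 (by omega)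
    have h7 : 0 < p ^ β := by positivity
    nlinarith
  have hcpn : c ^ (p:ℕ) = 1 := by rw [← zpow_natCast]; exact hcp
  have hordc : orderOf c = p := orderOf_eq_prime hcpn hcne
  -- valuations
  have hpowα : (p:ℤ) ^ α = (p:ℤ) ^ (α - 1) * p := by rw [← pow_succ]; congr 1; omega
  have hpowβ : (p:ℤ) ^ β = (p:ℤ) ^ (β - 1) * p := by rw [← pow_succ]; congr 1; omega
  have hdvd_ma : (p:ℤ) ^ (α - 1) ∣ (m - 1) := by
    have h1 : a ^ ((m-1) * ((p:ℕ):ℤ)) = 1 := by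
      rw [zpow_mul, ← hc]
      exact hcp
    have h2 : ((p ^ α : ℕ) : ℤ) ∣ (m - 1) * ((p:ℕ):ℤ) := by
      rw [← hα]
      exact orderOf_dvd_iff_zpow_eq_one.mpr h1
    push_cast at h2
    rw [hpowα] at h2
    exact (mul_dvd_mul_iff_right (by exact_mod_cast hp.ne_zero : (p:ℤ) ≠ 0)).mp h2
  have hndvd_ma : ¬ ((p:ℤ) ^ α ∣ (m - 1)) := by
    intro h
    apply hcne
    rw [hc]
    apply orderOf_dvd_iff_zpow_eq_one.mp
    rw [hα]
    push_cast
    exact h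
  obtain ⟨w, hw⟩ := hdvd_ma
  have hpw : ¬ ((p:ℤ) ∣ w) := by
    rintro ⟨t, ht⟩
    apply hndvd_ma
    exact ⟨t, by rw [hpowα, hw, ht]; ring⟩
  have hdvd_nb : (p:ℤ) ^ (β - 1) ∣ (1 - n) := by
    have h1 : b ^ ((1-n) * ((p:ℕ):ℤ)) = 1 := by
      rw [zpow_mul, ← hcb']
      exact hcp
    have h2 : ((p ^ β : ℕ) : ℤ) ∣ (1 - n) * ((p:ℕ):ℤ) := by
      rw [← hβ]
      exact orderOf_dvd_iff_zpow_eq_one.mpr h1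
    push_cast at h2
    rw [hpowβ] at h2
    exact (mul_dvd_mul_iff_right (by exact_mod_cast hp.ne_zero : (p:ℤ) ≠ 0)).mp h2
  have hndvd_nb : ¬ ((p:ℤ) ^ β ∣ (1 - n)) := by
    intro h
    apply hcne
    rw [hcb']
    apply orderOf_dvd_iff_zpow_eq_one.mp
    rw [hβ]
    push_cast
    exact h
  obtain ⟨w', hw'⟩ := hdvd_nb
  have hpw' : ¬ ((p:ℤ) ∣ w') := by
    rintro ⟨t, ht⟩
    apply hndvd_nb
    exact ⟨t, by rw [hpowβ, hw', ht]; ring⟩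
  obtain ⟨z, t, hzt⟩ := bezout' p hp w' hpw'
  obtain ⟨z₂, t₂, hzt₂⟩ := bezout' p hp w hpw
  -- key power identities
  have hbord : b ^ ((p:ℤ) ^ β) = 1 := by
    apply orderOf_dvd_iff_zpow_eq_one.mp
    rw [hβ]
    push_cast
    rfl
  have haord : a ^ ((p:ℤ) ^ α) = 1 := by
    apply orderOf_dvd_iff_zpow_eq_one.mp
    rw [hα]
    push_cast
    rfl
  have hbpow : b ^ ((p:ℤ) ^ (β-1)) = c ^ z := by
    have h1 : c ^ z = b ^ ((1-n) * z) := by rw [hcb', ← zpow_mul]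
    have h2 : (1-n) * z = (p:ℤ)^(β-1) + (p:ℤ)^β * (-t) := by
      rw [hw', hpowβ]
      linear_combination ((p:ℤ)^(β-1)) * hzt
    rw [h1, h2, zpow_add, zpow_mul, hbord, one_zpow, mul_one]
  have hapow : a ^ ((p:ℤ) ^ (α-1)) = c ^ z₂ := by
    have h1 : c ^ z₂ = a ^ ((m-1) * z₂) := by rw [hc, ← zpow_mul]
    have h2 : (m-1) * z₂ = (p:ℤ)^(α-1) + (p:ℤ)^α * (-t₂) := by
      rw [hw, hpowα]
      linear_combination ((p:ℤ)^(α-1)) * hzt₂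
    rw [h1, h2, zpow_add, zpow_mul, haord, one_zpow, mul_one]
  -- β ≥ 2 and α ≥ 2
  have hβ2 : 2 ≤ β := by
    by_contra hcon
    have hβe : β = 1 := by omega
    have hb1n : b ^ ((1-n) * z) = c ^ z := by rw [hcb', ← zpow_mul]
    have h2 : (1-n) * z = 1 + (p:ℤ) * (-t) - 0 := by
      rw [hw', hβe]
      norm_num
      linarith [hzt]
    have hbpz : b ^ ((p:ℕ):ℤ) = 1 := by
      have := hbord
      rw [hβe] at this
      push_cast
      rw [← this]
      congr 1
      rw [pow_one]
    have hbeq : b = c ^ z := by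
      rw [← hb1n, h2]
      rw [sub_zero, zpow_add, zpow_one, zpow_mul, hbpz, one_zpow, mul_one]
    have hcom : Commute a b := by
      rw [hbeq, hc]
      exact ((Commute.refl a).zpow_right (m-1)).zpow_right z
    exact hab hcom.eq
  have hα2 : 2 ≤ α := by
    by_contra hcon
    have hαe : α = 1 := by omega
    have ha1m : a ^ ((m-1) * z₂) = c ^ z₂ := by rw [hc, ← zpow_mul]
    have h2 : (m-1) * z₂ = 1 + (p:ℤ) * (-t₂) - 0 := by
      rw [hw, hαe]
      norm_num
      linarith [hzt₂]
    have hapz : a ^ ((p:ℕ):ℤ) = 1 := by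
      have := haord
      rw [hαe] at this
      push_cast
      rw [← this]
      congr 1
      rw [pow_one]
    have haeq : a = c ^ z₂ := by
      rw [← ha1m, h2]
      rw [sub_zero, zpow_add, zpow_one, zpow_mul, hapz, one_zpow, mul_one]
    have hcom : Commute b a := by
      rw [haeq, hcb']
      exact ((Commute.refl b).zpow_right (1-n)).zpow_right z₂
    exact hab hcom.symm.eq
  -- reduction: p cannot divide choose (p^(β-1)) 2
  have hred : ¬ ((p:ℕ) ∣ Nat.choose (p ^ (β - 1)) 2) := by
    intro hdvd
    set e : ℤ := (p:ℤ)^(α-β) * w * z with he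
    set g : P := a ^ (-e) with hg
    have hgb : g * b = b * (g * c ^ e) := by
      have h1 := hconj_a' (-e)
      calc g * b = b * (b⁻¹ * a ^ (-e) * b) := by rw [hg]; group
        _ = b * (a ^ (-e) * c ^ (- -e)) := by rw [h1]
        _ = b * (g * c ^ e) := by rw [neg_neg, hg]
    have hc1 : Commute (c ^ e) b := hcbb.symm.zpow_left e
    have hc2 : Commute (c ^ e) g := by
      rw [hg]
      exact (hca.symm.zpow_left e).zpow_right (-e)
    have hform := pow_formula hgb hc1 hc2 (p ^ (β - 1))
    have hf1 : b ^ (p ^ (β-1) : ℕ) = c ^ z := by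
      rw [← zpow_natCast b]
      push_cast
      exact hbpow
    have hf2 : g ^ (p ^ (β-1) : ℕ) = (c ^ z)⁻¹ := by
      rw [hg, ← zpow_natCast, ← zpow_mul]
      have hpow2 : (p:ℤ)^(α-β) * (p:ℤ)^(β-1) = (p:ℤ)^(α-1) := by
        rw [← pow_add]
        congr 1
        omega
      have h3 : (-e) * ((p ^ (β-1) : ℕ) : ℤ) = -((m - 1) * z) := by
        rw [he, hw]
        push_cast
        linear_combination (-(w*z)) * hpow2
      rw [h3, zpow_neg, zpow_mul, ← hc]
    have hf3 : (c ^ e) ^ ((p ^ (β-1)).choose 2) = 1 := by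
      obtain ⟨q, hq⟩ := hdvd
      rw [← zpow_natCast, ← zpow_mul, hq]
      push_cast
      have h4 : e * ((p:ℤ) * q) = ((p:ℕ):ℤ) * (e * q) := by push_cast; ring
      rw [h4, zpow_mul, hcp, one_zpow]
    rw [hf1, hf2, hf3] at hform
    have hyk : (b * g) ^ (p ^ (β-1) : ℕ) = 1 := by rw [hform]; group
    have hya : (b * g) * a ≠ a * (b * g) := by
      intro hcomm
      apply hcne
      have h5 : (b * g) * a * (b * g)⁻¹ = a := by rw [hcomm]; group
      have h6 : (b * g) * a * (b * g)⁻¹ = a * c := by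
        rw [hg]
        calc b * a ^ (-e) * a * (b * a ^ (-e))⁻¹
            = b * (a ^ (-e) * a * a ^ e) * b⁻¹ := by
              rw [mul_inv_rev, zpow_neg, inv_inv]
              group
          _ = b * a * b⁻¹ := by
              congr 2
              have h7 : a ^ (-e) * a * a ^ e = a ^ (-e + 1 + e) := by
                rw [zpow_add, zpow_add, zpow_one]
              rw [h7]
              norm_num
          _ = a * c := hac
      rw [h5] at h6
      have h8 : a * (1:P) = a * c := by rw [mul_one]; exact h6
      exact (mul_left_cancel h8).symm
    have hmm := hmin (b * g) a hya
    have hordy : orderOf (b * g) ≤ p ^ (β-1) :=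
      Nat.le_of_dvd (by positivity) (orderOf_dvd_of_pow_eq_one hyk)
    rw [hα, hβ] at hmm
    have h8 : p ^ (β-1) < p ^ β := Nat.pow_lt_pow_right hp1 (by omega)
    have h9 : 0 < p ^ α := by positivity
    nlinarith [hmm, hordy, h8, h9]
  -- the choose identity
  have hid : Nat.choose (p ^ (β-1)) 2 * 2 = (p ^ (β-1)) * (p ^ (β-1) - 1) := by
    rw [Nat.choose_two_right]
    apply Nat.div_mul_cancel
    rcases Nat.even_or_odd (p ^ (β-1)) with h | h
    · exact Dvd.dvd.mul_right h.two_dvd _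
    · apply Dvd.dvd.mul_left
      obtain ⟨j, hj⟩ := h
      exact ⟨j, by omega⟩
  have hp2 : p = 2 := by
    by_contra hp2
    apply hred
    have hk1 : p ∣ p ^ (β - 1) := dvd_pow_self p (by omega)
    have h2 : p ∣ Nat.choose (p ^ (β-1)) 2 * 2 := hid ▸ hk1.mul_right _
    rcases (Nat.Prime.dvd_mul hp).mp h2 with h | h
    · exact h
    · exact absurd ((Nat.prime_dvd_prime_iff_eq hp Nat.prime_two).mp h) hp2
  have hβeq : β = 2 := by
    by_contra hβ3
    apply hred
    have hβ3' : 3 ≤ β := by omega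
    have h4 : 2^2 ∣ p ^ (β - 1) := by
      rw [hp2]
      exact pow_dvd_pow 2 (by omega)
    obtain ⟨q, hq⟩ := h4
    have h5 : Nat.choose (p^(β-1)) 2 * 2 = 4 * (q * (p^(β-1) - 1)) := by
      rw [hid, hq]; ring
    rw [hp2] at h5 ⊢
    omega
  subst hp2
  subst hβeq
  -- cleanup casts
  have hc2 : c ^ (2:ℤ) = 1 := by exact_mod_cast hcp
  have hzodd : Odd z := by
    rcases Int.even_or_odd z with h | h
    · exfalso
      obtain ⟨s, hs⟩ := h
      push_cast at hzt
      rw [hs] at hzt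
      have h2 : 2 * (w' * s + t) = 1 := by linear_combination hzt
      omega
    · exact h
  have hz2odd : Odd z₂ := by
    rcases Int.even_or_odd z₂ with h | h
    · exfalso
      obtain ⟨s, hs⟩ := h
      push_cast at hzt₂
      rw [hs] at hzt₂
      have h2 : 2 * (w * s + t₂) = 1 := by linear_combination hzt₂
      omega
    · exact h
  have hcz : ∀ {z' : ℤ}, Odd z' → c ^ z' = c := by
    rintro z' ⟨s, hs⟩
    rw [hs, zpow_add, zpow_one, zpow_mul, hc2, one_zpow, one_mul]
  have hb2 : b ^ (2:ℤ) = c := by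
    have h1 := hbpow
    rw [hcz hzodd] at h1
    rw [← h1]
    norm_num
  have ha2c : a ^ ((2:ℤ) ^ (α-1)) = c := by
    have h1 := hapow
    rw [hcz hz2odd] at h1
    rw [← h1]
    norm_num
  -- α = 2
  have hαeq : α = 2 := by
    by_contra hne2
    have hα3 : 3 ≤ α := by omega
    set E : ℤ := (2:ℤ)^(α-2) with hE
    set u : P := a ^ E * b with hu
    have hcc : Commute (a ^ E) c := hca.zpow_left E
    have hua : u * a ≠ a * u := by
      intro hcomm
      apply hcne
      have h5 : u * a * u⁻¹ = a := by rw [hcomm]; group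
      have h6 : u * a * u⁻¹ = a * c := by
        rw [hu]
        calc a ^ E * b * a * (a ^ E * b)⁻¹
            = a ^ E * (b * a * b⁻¹) * a ^ (-E) := by
              rw [mul_inv_rev, zpow_neg]
              group
          _ = a ^ E * (a * c) * a ^ (-E) := by rw [hac]
          _ = a ^ E * a * (c * a ^ (-E)) := by group
          _ = a ^ E * a * (a ^ (-E) * c) := by rw [(hca.symm.zpow_right (-E)).eq]
          _ = (a ^ E * a * a ^ (-E)) * c := by group
          _ = a * c := by
              congr 1
              have h7 : a ^ E * a * a ^ (-E) = a ^ (E + 1 + -E) := by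
                rw [zpow_add, zpow_add, zpow_one]
              rw [h7]
              norm_num
      rw [h5] at h6
      have h8 : a * (1:P) = a * c := by rw [mul_one]; exact h6
      exact (mul_left_cancel h8).symm
    have hcE : c ^ E = 1 := by
      obtain ⟨s, hs⟩ : (2:ℤ) ∣ E := by
        rw [hE]
        exact ⟨2^(α-3), by rw [← pow_succ']; congr 1; omega⟩
      rw [hs, zpow_mul, hc2, one_zpow]
    have hu2 : u ^ (2:ℕ) = 1 := by
      rw [hu, pow_two]
      have h1 := hconj_a E
      calc a ^ E * b * (a ^ E * b)
          = a ^ E * (b * a ^ E * b⁻¹) * (b * b) := by group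
        _ = a ^ E * (a ^ E * c ^ E) * (b * b) := by rw [h1]
        _ = (a ^ E * a ^ E) * c ^ E * (b * b) := by group
        _ = a ^ ((2:ℤ)^(α-1)) * c ^ E * (b * b) := by
            have hEE : E + E = (2:ℤ)^(α-1) := by
              rw [hE, ← two_mul, ← pow_succ']
              congr 1
              omega
            rw [← zpow_add, hEE]
        _ = c * c ^ E * (b * b) := by rw [ha2c]
        _ = c * (b * b) := by rw [hcE, mul_one]
        _ = c * c := by
            congr 1
            have : b * b = b ^ (2:ℤ) := by
              rw [zpow_two]
            rw [this, hb2]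
        _ = 1 := by
            have : c * c = c ^ (2:ℤ) := by rw [zpow_two]
            rw [this, hc2]
    have hmm := hmin u a hua
    have hordu : orderOf u ≤ 2 :=
      Nat.le_of_dvd (by norm_num) (orderOf_dvd_of_pow_eq_one hu2)
    rw [hα, hβ] at hmm
    have h9 : 0 < (2:ℕ) ^ α := by positivity
    have h11 : orderOf u * 2 ^ α ≤ 2 * 2 ^ α := Nat.mul_le_mul_right _ hordu
    have h10 : (2:ℕ) ^ 2 = 4 := by norm_num
    rw [h10] at hmm
    omega
  subst hαeq
  -- final conclusions
  have hordA : orderOf a = 4 := by rw [hα]; norm_num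
  have ha2 : a ^ (2:ℤ) = c := by
    have := ha2c
    norm_num at this
    exact_mod_cast this
  refine ⟨hordA, ?_, ?_⟩
  · rw [← zpow_natCast b, ← zpow_natCast a]
    push_cast
    rw [hb2, ← ha2]
  · rw [hac, ← ha2]
    have ha4 : a ^ (4:ℤ) = 1 := by
      apply orderOf_dvd_iff_zpow_eq_one.mp
      rw [hordA]
      norm_num
    calc a * a ^ (2:ℤ) = a ^ (3:ℤ) := by
          rw [show (3:ℤ) = 1 + 2 by norm_num, zpow_add, zpow_one]
      _ = a ^ (3:ℤ) * a ^ (4:ℤ) * (a ^ (4:ℤ))⁻¹ := by group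
      _ = a ^ (3:ℤ) * 1 * 1⁻¹ := by rw [ha4]
      _ = a ^ (3:ℤ) := by group
      _ = a⁻¹ := by
          rw [← zpow_neg_one]
          rw [show (3:ℤ) = -1 + 4 by norm_num, zpow_add, ha4, mul_one]

private lemma q8_iso {P : Type*} [Group P] [Finite P] (A B : P)
    (h4 : orderOf A = 4) (hB2 : B ^ 2 = A ^ 2) (hconj : B * A * B⁻¹ = A⁻¹)
    (hne : A * B ≠ B * A)
    (htop : Subgroup.closure ({A, B} : Set P) = ⊤) :
    Nonempty (P ≃* QuaternionGroup 2) := by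
  have hA4 : A ^ (4 : ℤ) = 1 := by
    have := pow_orderOf_eq_one A
    rw [h4] at this
    exact_mod_cast this
  have key : ∀ x y : ℤ, ((x : ZMod (2 * 2)) = (y : ZMod (2 * 2))) → A ^ x = A ^ y := by
    intro x y h
    obtain ⟨t, ht⟩ := ((ZMod.intCast_eq_intCast_iff _ _ _).mp h).dvd
    have hx : y = x + 4 * t := by push_cast at ht ⊢; linarith
    rw [hx, zpow_add, zpow_mul, hA4, one_zpow, mul_one]
  have hconjk : ∀ k : ℤ, B * A ^ k * B⁻¹ = A ^ (-k) := by
    intro k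
    calc B * A ^ k * B⁻¹ = (B * A * B⁻¹) ^ k := conj_zpow.symm
    _ = A⁻¹ ^ k := by rw [hconj]
    _ = A ^ (-k) := by rw [inv_zpow, zpow_neg]
  have hABk : ∀ k : ℤ, A ^ k * B = B * A ^ (-k) := by
    intro k
    have h := hconjk (-k)
    rw [neg_neg] at h
    rw [← h]
    group
  set f : QuaternionGroup 2 → P := fun x =>
    match x with
    | QuaternionGroup.a i => A ^ (i.val : ℤ)
    | QuaternionGroup.xa i => B * A ^ (i.val : ℤ)
    with hf
  have hmul : ∀ x y : QuaternionGroup 2, f (x * y) = f x * f y := by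
    rintro (i | i) (j | j)
    · show A ^ (((i + j).val : ℤ)) = A ^ (i.val : ℤ) * A ^ (j.val : ℤ)
      rw [← zpow_add]
      apply key
      push_cast
      simp [ZMod.natCast_val, ZMod.cast_id]
    · show B * A ^ (((j - i).val : ℤ)) = A ^ (i.val : ℤ) * (B * A ^ (j.val : ℤ))
      rw [← mul_assoc, hABk, mul_assoc, ← zpow_add]
      congr 1
      apply key
      push_cast
      simp [ZMod.natCast_val, ZMod.cast_id]
      ring
    · show B * A ^ (((i + j).val : ℤ)) = B * A ^ (i.val : ℤ) * A ^ (j.val : ℤ)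
      rw [mul_assoc, ← zpow_add]
      congr 1
      apply key
      push_cast
      simp [ZMod.natCast_val, ZMod.cast_id]
    · show A ^ ((((2 : ℕ) + j - i).val : ℤ)) = B * A ^ (i.val : ℤ) * (B * A ^ (j.val : ℤ))
      have hBB : B * B = A ^ (2 : ℤ) := by
        have h2 : B * B = B ^ 2 := (sq B).symm
        rw [h2, hB2, ← zpow_natCast]
        norm_num
      rw [mul_assoc, ← mul_assoc (A ^ (i.val : ℤ)), hABk, ← mul_assoc, ← mul_assoc, hBB,
        mul_assoc, ← zpow_add, ← zpow_add]
      apply key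
      push_cast
      simp [ZMod.natCast_val, ZMod.cast_id]
      ring
  let F : QuaternionGroup 2 →* P := MonoidHom.mk' f hmul
  have hFA : F (QuaternionGroup.a 1) = A := by
    show A ^ (((1 : ZMod (2 * 2)).val : ℤ)) = A
    have h1 : (((1 : ZMod (2 * 2)).val : ℤ)) = 1 := by decide
    rw [h1, zpow_one]
  have hFB : F (QuaternionGroup.xa 0) = B := by
    show B * A ^ (((0 : ZMod (2 * 2)).val : ℤ)) = B
    simp [ZMod.val_zero]
  have hsurj : Function.Surjective F := by
    have hrange : F.range = ⊤ := by
      rw [← top_le_iff, ← htop, Subgroup.closure_le]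
      rintro x (rfl | rfl)
      · exact ⟨QuaternionGroup.a 1, hFA⟩
      · exact ⟨QuaternionGroup.xa 0, hFB⟩
    exact MonoidHom.range_eq_top.mp hrange
  have hcardQ : Nat.card (QuaternionGroup 2) = 8 := by
    rw [Nat.card_eq_fintype_card, QuaternionGroup.card]
  have hfact : Nat.card P * Nat.card F.ker = 8 := by
    have h1 := Subgroup.card_eq_card_quotient_mul_card_subgroup F.ker
    rw [hcardQ] at h1
    have h2 : Nat.card (QuaternionGroup 2 ⧸ F.ker) = Nat.card P := by
      exact Nat.card_congr (QuotientGroup.quotientKerEquivOfSurjective F hsurj).toEquiv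
    rw [h2] at h1
    exact h1.symm
  have hdvd4 : 4 ∣ Nat.card P := h4 ▸ orderOf_dvd_natCard A
  have hne4 : Nat.card P ≠ 4 := by
    intro hcard
    have hz : Nat.card (zpowers A) = Nat.card P := by
      rw [Nat.card_zpowers, h4, hcard]
    have htopz : zpowers A = ⊤ := Subgroup.eq_top_of_card_eq _ hz
    have hBmem : B ∈ zpowers A := htopz ▸ Subgroup.mem_top B
    obtain ⟨k, hk⟩ := hBmem
    apply hne
    rw [← hk]
    exact (Commute.zpow_right (Commute.refl A) k).eq
  have hcardP : Nat.card P = 8 := by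
    have hdvd8 : Nat.card P ∣ 8 := ⟨Nat.card F.ker, hfact.symm⟩
    have hpos : 0 < Nat.card P := Nat.card_pos
    have hle : Nat.card P ≤ 8 := Nat.le_of_dvd (by norm_num) hdvd8
    interval_cases h : Nat.card P <;> first | rfl | (exfalso; revert hdvd4 hdvd8 hne4; decide)
  have hker : F.ker = ⊥ := by
    rw [← Subgroup.card_eq_one]
    rw [hcardP] at hfact
    omega
  have hinj : Function.Injective F := (MonoidHom.ker_eq_bot_iff F).mp hker
  exact ⟨(MulEquiv.ofBijective F ⟨hinj, hsurj⟩).symm⟩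

theorem stmt_9 {P : Type*} [Group P] [Finite P] (p : ℕ) (hp : p.Prime)
    (hpgrp : IsPGroup p P)
    (hna : ¬ ∀ a b : P, a * b = b * a)
    (hprop : ∀ H : Subgroup P, H ≠ ⊤ → ∀ a b : H, a * b = b * a)
    (hQ8 : IsEmpty (P ≃* QuaternionGroup 2)) :
    ∃ P₀ : Subgroup P, ¬ P₀.Normal := by
  by_contra hcon
  push_neg at hcon
  push_neg at hna
  obtain ⟨a0, b0, hab0⟩ := hna
  classical
  have hS : ∃ N : ℕ, ∃ x y : P, x * y ≠ y * x ∧ orderOf x * orderOf y = N :=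
    ⟨_, a0, b0, hab0, rfl⟩
  obtain ⟨x, y, hxy, hxyN⟩ := Nat.find_spec hS
  have hminN : ∀ u v : P, u * v ≠ v * u → Nat.find hS ≤ orderOf u * orderOf v := by
    intro u v huv
    by_contra hlt
    push_neg at hlt
    exact Nat.find_min hS hlt ⟨u, v, huv, rfl⟩
  obtain ⟨A, B, hAB, hminP, hordP⟩ :
      ∃ A B : P, A * B ≠ B * A ∧
        (∀ u v : P, u * v ≠ v * u → orderOf A * orderOf B ≤ orderOf u * orderOf v) ∧
        orderOf B ≤ orderOf A := by
    rcases le_total (orderOf y) (orderOf x) with h | h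
    · refine ⟨x, y, hxy, fun u v huv => ?_, h⟩
      rw [hxyN]
      exact hminN u v huv
    · refine ⟨y, x, fun hh => hxy hh.symm, fun u v huv => ?_, h⟩
      rw [mul_comm, hxyN]
      exact hminN u v huv
  obtain ⟨hordA4, hB2A2, hconjBA⟩ := aux p hp hpgrp hcon A B hAB hminP hordP
  have htop : Subgroup.closure ({A, B} : Set P) = ⊤ := by
    by_contra hne
    have hcomm := hprop (Subgroup.closure {A, B}) hne
      ⟨A, Subgroup.subset_closure (by simp)⟩ ⟨B, Subgroup.subset_closure (by simp)⟩
    apply hAB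
    have h2 := congrArg Subtype.val hcomm
    simpa using h2
  obtain ⟨iso⟩ := q8_iso A B hordA4 hB2A2 hconjBA hAB htop
  exact hQ8.false iso
end

section
/- Let G be a finite group that is a semidirect product of an abelian normal subgroup H of odd order by a group of order 2, where every element φ of order 2 in G acts on H by inversion: φhφ⁻¹ = h⁻¹ for all h ∈ H. Then every subgroup of G of odd order is contained in H and is normal in G, while every subgroup of G of even order equals its own normalizer in G. -/
theorem stmt_12 {G : Type*} [Group G] [Finite G]
    (H : Subgroup G) (hnorm : H.Normal)
    (hab : ∀ a b : H, a * b = b * a)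
    (hodd : Odd (Nat.card H))
    (hindex : H.index = 2)
    (hinv : ∀ φ : G, φ ^ 2 = 1 → φ ≠ 1 → ∀ h ∈ H, φ * h * φ⁻¹ = h⁻¹) :
    (∀ K : Subgroup G, Odd (Nat.card K) → K ≤ H ∧ K.Normal) ∧
    (∀ K : Subgroup G, Even (Nat.card K) → Subgroup.normalizer (K : Set G) = K) := by
  -- any element of odd order lies in H
  have hmemH : ∀ x : G, Odd (orderOf x) → x ∈ H := by
    intro x hn
    obtain ⟨m, hm⟩ := hn
    have h1 : x ^ orderOf x = 1 := pow_orderOf_eq_one x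
    have h2 : x ^ 2 ∈ H := Subgroup.sq_mem_of_index_two hindex x
    have hx : x = ((x ^ 2) ^ m)⁻¹ := by
      rw [← pow_mul, eq_inv_iff_mul_eq_one, ← pow_succ']
      rw [hm] at h1
      simpa [mul_comm 2 m] using h1
    rw [hx]
    exact inv_mem (pow_mem h2 m)
  -- elements of H have odd order
  have hoddOrder : ∀ x : G, x ∈ H → Odd (orderOf x) := by
    intro x hx
    have h1 : orderOf (⟨x, hx⟩ : H) ∣ Nat.card H := orderOf_dvd_natCard _
    rw [Subgroup.orderOf_mk] at h1
    exact Odd.of_dvd_nat hodd h1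
  -- H has odd order elements only, so an involution exists outside H
  have hcard : Nat.card G = 2 * Nat.card H := by
    rw [← hindex, ← Subgroup.index_mul_card H]
  have h2dvd : (2 : ℕ) ∣ Nat.card G := ⟨Nat.card H, hcard⟩
  have : Fact (Nat.Prime 2) := ⟨Nat.prime_two⟩
  obtain ⟨φ, hφ⟩ := exists_prime_orderOf_dvd_card' (G := G) 2 h2dvd
  have hφ2 : φ ^ 2 = 1 := by rw [← hφ]; exact pow_orderOf_eq_one φ
  have hφ1 : φ ≠ 1 := by
    intro h; rw [h, orderOf_one] at hφ; omega
  have hφH : φ ∉ H := by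
    intro h
    have := hoddOrder φ h
    rw [hφ] at this
    exact (by decide : ¬ Odd 2) this
  -- key conjugation fact
  have hconjK : ∀ (K : Subgroup G), K ≤ H → ∀ g : G, ∀ k ∈ K, g * k * g⁻¹ ∈ K := by
    intro K hKH g k hk
    by_cases hg : g ∈ H
    · -- g, k ∈ H commute
      have : (⟨g, hg⟩ : H) * ⟨k, hKH hk⟩ = ⟨k, hKH hk⟩ * ⟨g, hg⟩ := hab _ _
      have hc : g * k = k * g := congrArg Subtype.val this
      have heq : g * k * g⁻¹ = k := by rw [hc, mul_inv_cancel_right]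
      rw [heq]; exact hk
    · -- g = h * φ⁻¹ with h = g * φ ∈ H
      have hgφ : g * φ ∈ H := by
        rw [Subgroup.mul_mem_iff_of_index_two hindex]
        simp [hg, hφH]
      have hφinv : φ⁻¹ = φ := by
        rw [← mul_eq_one_iff_inv_eq, ← pow_two, hφ2]
      have hconj : φ * k * φ⁻¹ = k⁻¹ := hinv φ hφ2 hφ1 k (hKH hk)
      have hgeq : g = (g * φ) * φ⁻¹ := by group
      rw [hgeq]
      have h := g * φ
      set h := g * φ with hh
      have hcomm : (⟨h, hgφ⟩ : H) * ⟨k⁻¹, inv_mem (hKH hk)⟩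
          = ⟨k⁻¹, inv_mem (hKH hk)⟩ * ⟨h, hgφ⟩ := hab _ _
      have hc : h * k⁻¹ = k⁻¹ * h := congrArg Subtype.val hcomm
      have : (h * φ⁻¹) * k * (h * φ⁻¹)⁻¹ = h * (φ * k * φ⁻¹) * h⁻¹ := by
        simp only [mul_inv_rev, inv_inv, hφinv]; group
      rw [this, hconj, hc, mul_inv_cancel_right]
      exact inv_mem hk
  constructor
  · intro K hK
    have hKH : K ≤ H := by
      intro k hk
      apply hmemH
      have h1 : orderOf (⟨k, hk⟩ : K) ∣ Nat.card K := orderOf_dvd_natCard _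
      rw [Subgroup.orderOf_mk] at h1
      exact Odd.of_dvd_nat hK h1
    exact ⟨hKH, ⟨fun k hk g => hconjK K hKH g k hk⟩⟩
  · intro K hK
    -- K contains an involution τ
    have h2K : (2 : ℕ) ∣ Nat.card K := hK.two_dvd
    obtain ⟨τ', hτ'⟩ := exists_prime_orderOf_dvd_card' (G := K) 2 h2K
    set τ : G := (τ' : G) with hτdef
    have hτord : orderOf τ = 2 := by rw [hτdef, Subgroup.orderOf_coe, hτ']
    have hτ2 : τ ^ 2 = 1 := by rw [← hτord]; exact pow_orderOf_eq_one τ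
    have hτ1 : τ ≠ 1 := by intro h; rw [h, orderOf_one] at hτord; omega
    have hτK : τ ∈ K := τ'.2
    have hτH : τ ∉ H := by
      intro h
      have := hoddOrder τ h
      rw [hτord] at this
      exact (by decide : ¬ Odd 2) this
    have hτinv : τ⁻¹ = τ := by rw [← mul_eq_one_iff_inv_eq, ← pow_two, hτ2]
    -- step: elements of the normalizer lying in H are in K
    have keyH : ∀ g ∈ Subgroup.normalizer (K : Set G), g ∈ H → g ∈ K := by
      intro g hg hgH
      have hsq : g ^ 2 ∈ K := by
        have hc : g * τ * g⁻¹ ∈ K := (Subgroup.mem_normalizer_iff.mp hg τ).mp hτK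
        have hconj : τ * g⁻¹ * τ⁻¹ = g := by
          rw [hinv τ hτ2 hτ1 g⁻¹ (inv_mem hgH), inv_inv]
        have : g * τ * g⁻¹ = g ^ 2 * τ := by
          have : g * τ * g⁻¹ = g * (τ * g⁻¹ * τ⁻¹) * τ := by group
          rw [this, hconj, pow_two]
        rw [this] at hc
        have := mul_mem hc (inv_mem hτK)
        simpa using this
      obtain ⟨m, hm⟩ := hoddOrder g hgH
      have h1 : g ^ orderOf g = 1 := pow_orderOf_eq_one g
      have hx : g = ((g ^ 2) ^ m)⁻¹ := by
        rw [← pow_mul, eq_inv_iff_mul_eq_one, ← pow_succ']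
        rw [hm] at h1
        simpa [mul_comm 2 m] using h1
      rw [hx]
      exact inv_mem (pow_mem hsq m)
    apply le_antisymm _ Subgroup.le_normalizer
    intro g hg
    by_cases hgH : g ∈ H
    · exact keyH g hg hgH
    · have hτg : τ * g ∈ H := by
        rw [Subgroup.mul_mem_iff_of_index_two hindex]
        simp [hτH, hgH]
      have hτgN : τ * g ∈ Subgroup.normalizer (K : Set G) := mul_mem (Subgroup.le_normalizer hτK) hg
      have := keyH (τ * g) hτgN hτg
      have := mul_mem (inv_mem hτK) this
      simpa using this
end

section
/- Let G be a finite group that is a semidirect product of an abelian normal subgroup H of odd order by a group of order 2 acting by inversion on H. If H₀ is a subgroup of G and n is a positive integer dividing |G| and divisible by |H₀|, then there exists a subgroup H₁ of G of order n containing H₀. -/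
open scoped Pointwise

section Aux

variable {A : Type*} [CommGroup A] [Finite A]

lemma aux_step (B : Subgroup A) {p : ℕ} (hp : p.Prime)
    (hdvd : p ∣ Nat.card (A ⧸ B)) :
    ∃ C : Subgroup A, B ≤ C ∧ Nat.card C = p * Nat.card B := by
  haveI : Fact p.Prime := ⟨hp⟩
  obtain ⟨x, hx⟩ := exists_prime_orderOf_dvd_card' (G := A ⧸ B) p hdvd
  refine ⟨Subgroup.comap (QuotientGroup.mk' B) (Subgroup.zpowers x), ?_, ?_⟩
  · intro y hy
    simp only [Subgroup.mem_comap, QuotientGroup.mk'_apply]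
    have : ((y : A) : A ⧸ B) = 1 := (QuotientGroup.eq_one_iff y).2 hy
    rw [this]
    exact Subgroup.one_mem _
  · have e := QuotientGroup.preimageMkEquivSubgroupProdSet B
      ((Subgroup.zpowers x : Subgroup (A ⧸ B)) : Set (A ⧸ B))
    have hcard : Nat.card (Subgroup.comap (QuotientGroup.mk' B) (Subgroup.zpowers x)) =
        Nat.card (B × ((Subgroup.zpowers x : Subgroup (A ⧸ B)) : Set (A ⧸ B))) :=
      Nat.card_congr e
    rw [hcard, Nat.card_prod, SetLike.coe_sort_coe, Nat.card_zpowers, hx, mul_comm]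

lemma aux_extend (m : ℕ) (hmA : m ∣ Nat.card A) :
    ∀ k : ℕ, ∀ B : Subgroup A, m = Nat.card B * k →
      ∃ C : Subgroup A, B ≤ C ∧ Nat.card C = m := by
  intro k
  induction k using Nat.strong_induction_on with
  | _ k ih =>
    intro B hk
    have hBpos : 0 < Nat.card B := Nat.card_pos
    have hApos : 0 < Nat.card A := Nat.card_pos
    have hmpos : 0 < m := Nat.pos_of_dvd_of_pos hmA hApos
    rcases eq_or_ne k 1 with rfl | hk1
    · exact ⟨B, le_refl B, by omega⟩
    · have hk0 : k ≠ 0 := by rintro rfl; omega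
      obtain ⟨p, hp, hpk⟩ := Nat.exists_prime_and_dvd hk1
      have hquot : Nat.card A = Nat.card (A ⧸ B) * Nat.card B :=
        Subgroup.card_eq_card_quotient_mul_card_subgroup B
      have hkq : k ∣ Nat.card (A ⧸ B) := by
        have h1 : Nat.card B * k ∣ Nat.card B * Nat.card (A ⧸ B) := by
          rw [← hk]
          rw [hquot, mul_comm] at hmA
          exact hmA
        exact (Nat.mul_dvd_mul_iff_left hBpos).1 h1
      obtain ⟨C, hBC, hC⟩ := aux_step B hp (hpk.trans hkq)
      obtain ⟨k', rfl⟩ := hpk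
      have hk'0 : k' ≠ 0 := by rintro rfl; omega
      have hm' : m = Nat.card C * k' := by rw [hC, hk]; ring
      have hlt : k' < p * k' := by
        have h2 := hp.two_le
        nlinarith [Nat.pos_of_ne_zero hk'0]
      obtain ⟨D, hCD, hD⟩ := ih k' hlt C hm'
      exact ⟨D, hBC.trans hCD, hD⟩

end Aux

theorem stmt_13 {G : Type*} [Group G] [Finite G]
    (H : Subgroup G) (hnorm : H.Normal)
    (hab : ∀ a b : H, a * b = b * a)
    (hodd : Odd (Nat.card H))
    (hindex : H.index = 2)
    (hinv : ∀ φ : G, φ ^ 2 = 1 → φ ≠ 1 → ∀ h ∈ H, φ * h * φ⁻¹ = h⁻¹)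
    (H₀ : Subgroup G) (n : ℕ) (hnpos : 0 < n)
    (hndvd : n ∣ Nat.card G) (hH₀dvd : Nat.card H₀ ∣ n) :
    ∃ H₁ : Subgroup G, Nat.card H₁ = n ∧ H₀ ≤ H₁ := by
  haveI := hnorm
  haveI : Fact (Nat.Prime 2) := ⟨Nat.prime_two⟩
  letI cg : CommGroup ↥H := { (inferInstance : Group ↥H) with mul_comm := hab }
  have hcardG : Nat.card G = 2 * Nat.card H := by
    rw [← H.card_mul_index, hindex]; ring
  have hQcard : Nat.card (G ⧸ H) = 2 := hindex
  -- product of two elements outside H lies in H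
  have hout : ∀ x ∉ H, ∀ y ∉ H, x * y ∈ H := by
    intro x hx y hy
    have h2 := hQcard
    rw [Nat.card_eq_two_iff' (1 : G ⧸ H)] at h2
    obtain ⟨z, hz, huniq⟩ := h2
    have hx' : ((x : G) : G ⧸ H) = z :=
      huniq _ (fun h => hx ((QuotientGroup.eq_one_iff x).1 h))
    have hy' : ((y : G) : G ⧸ H) = z :=
      huniq _ (fun h => hy ((QuotientGroup.eq_one_iff y).1 h))
    have hz2 : z * z = 1 := by
      have := pow_card_eq_one' (G := G ⧸ H) (x := z)
      rwa [hQcard, pow_two] at this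
    rw [← QuotientGroup.eq_one_iff]
    show ((x : G) : G ⧸ H) * ((y : G) : G ⧸ H) = 1
    rw [hx', hy', hz2]
  -- an involution outside H exists
  obtain ⟨σ, hσ⟩ := exists_prime_orderOf_dvd_card' (G := G) 2 ⟨Nat.card H, hcardG⟩
  have hσ2 : σ ^ 2 = 1 := hσ ▸ pow_orderOf_eq_one σ
  have hσ1 : σ ≠ 1 := by
    intro h; rw [h, orderOf_one] at hσ; omega
  have hoddH : ¬ (2 ∣ Nat.card H) := by
    rw [Nat.odd_iff] at hodd; omega
  have hσH : σ ∉ H := by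
    intro h
    have h1 : orderOf (⟨σ, h⟩ : H) = 2 := by
      rw [← orderOf_injective H.subtype H.subtype_injective ⟨σ, h⟩]
      exact hσ
    exact hoddH (h1 ▸ orderOf_dvd_natCard (⟨σ, h⟩ : H))
  -- every element outside H is an involution
  have hinvol : ∀ x ∉ H, x * x = 1 := by
    intro x hx
    have hh : x * σ ∈ H := hout x hx σ hσH
    have hinvσ : σ⁻¹ = σ := by
      apply inv_eq_of_mul_eq_one_right
      rw [← pow_two]; exact hσ2
    have h1 : σ * (x * σ) * σ⁻¹ = (x * σ)⁻¹ := hinv σ hσ2 hσ1 _ hh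
    rw [mul_inv_rev, hinvσ] at h1
    rw [mul_assoc] at h1
    have h2 : x * σ * σ = x⁻¹ := mul_left_cancel h1
    have hss : σ * σ = 1 := by rw [← pow_two]; exact hσ2
    rw [mul_assoc, hss, mul_one] at h2
    nth_rewrite 2 [h2]
    exact mul_inv_cancel x
  -- subgroups of H are normal in G
  have hKnormal : ∀ K : Subgroup G, K ≤ H → K.Normal := by
    intro K hKH
    constructor
    intro k hk g
    by_cases hg : g ∈ H
    · have h0 := hab ⟨g, hg⟩ ⟨k, hKH hk⟩
      have hgk : g * k = k * g := congrArg Subtype.val h0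
      have : g * k * g⁻¹ = k := by rw [hgk, mul_assoc, mul_inv_cancel, mul_one]
      rw [this]; exact hk
    · have hg2 : g ^ 2 = 1 := by rw [pow_two]; exact hinvol g hg
      have hg1 : g ≠ 1 := fun h => hg (h ▸ H.one_mem)
      have h1 := hinv g hg2 hg1 k (hKH hk)
      rw [h1]; exact K.inv_mem hk
  -- extension within H
  have hextendH : ∀ (B : Subgroup G), B ≤ H → ∀ m : ℕ, Nat.card B ∣ m → m ∣ Nat.card H →
      ∃ K : Subgroup G, B ≤ K ∧ K ≤ H ∧ Nat.card K = m := by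
    intro B hBH m hBm hmH
    have hcardB : Nat.card (B.subgroupOf H) = Nat.card B :=
      Nat.card_congr (Subgroup.subgroupOfEquivOfLe hBH).toEquiv
    obtain ⟨k, hk⟩ := hBm
    obtain ⟨C, hC1, hC2⟩ := aux_extend (A := ↥H) m hmH k (B.subgroupOf H)
      (by rw [hcardB]; exact hk)
    refine ⟨C.map H.subtype, ?_, ?_, ?_⟩
    · intro b hb
      exact ⟨⟨b, hBH hb⟩, hC1 (by simpa [Subgroup.mem_subgroupOf] using hb), rfl⟩
    · exact Subgroup.map_subtype_le C
    · rw [← hC2]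
      exact (Nat.card_congr (Subgroup.equivMapOfInjective C H.subtype
        H.subtype_injective).toEquiv).symm
  rcases Nat.even_or_odd n with hne | hno
  · -- even case
    obtain ⟨m, hm⟩ := hne
    have hm2 : n = 2 * m := by omega
    have hmH : m ∣ Nat.card H := by
      have : 2 * m ∣ 2 * Nat.card H := by rw [← hm2, ← hcardG]; exact hndvd
      exact (Nat.mul_dvd_mul_iff_left (by norm_num : 0 < 2)).1 this
    have hB0H : Nat.card (H₀ ⊓ H : Subgroup G) ∣ Nat.card H :=
      Subgroup.card_dvd_of_le inf_le_right
    have hB0m : Nat.card (H₀ ⊓ H : Subgroup G) ∣ m := by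
      have h1 : Nat.card (H₀ ⊓ H : Subgroup G) ∣ 2 * m := by
        rw [← hm2]; exact (Subgroup.card_dvd_of_le inf_le_left).trans hH₀dvd
      have hodd' : ¬ (2 ∣ Nat.card (H₀ ⊓ H : Subgroup G)) := fun h =>
        hoddH (h.trans hB0H)
      have hcop : Nat.Coprime (Nat.card (H₀ ⊓ H : Subgroup G)) 2 := by
        rw [Nat.coprime_comm, Nat.Prime.coprime_iff_not_dvd Nat.prime_two]
        exact hodd'
      exact hcop.dvd_of_dvd_mul_left h1
    obtain ⟨K, hK1, hK2, hK3⟩ := hextendH (H₀ ⊓ H) inf_le_right m hB0m hmH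
    -- generic cardinality computation
    have hcard : ∀ τ : G, τ ∉ H → τ * τ = 1 →
        Nat.card ↥(K ⊔ Subgroup.zpowers τ) = n := by
      intro τ hτH hττ
      set L := K ⊔ Subgroup.zpowers τ with hL
      haveI := hKnormal K hK2
      have key : ∀ t : G, t ∈ Subgroup.zpowers τ → t = 1 ∨ t = τ := by
        intro t ht
        obtain ⟨j, rfl⟩ := ht
        show τ ^ j = 1 ∨ τ ^ j = τ
        have h2 : τ ^ (2 : ℤ) = 1 := by rw [zpow_two]; exact hττ
        have hj : τ ^ j = τ ^ (j % 2) := by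
          conv_lhs => rw [← Int.mul_ediv_add_emod j 2]
          rw [zpow_add, zpow_mul, h2, one_zpow, one_mul]
        rcases Int.emod_two_eq j with h | h <;> rw [hj, h]
        · left; exact zpow_zero τ
        · right; exact zpow_one τ
      have hinf : H ⊓ L = K := by
        apply le_antisymm
        · rintro x ⟨hxH, hxL⟩
          have hxL' : x ∈ ((K : Set G) * (Subgroup.zpowers τ : Set G)) := by
            rw [← Subgroup.normal_mul K (Subgroup.zpowers τ)]
            exact hxL
          obtain ⟨k, hk, t, ht, rfl⟩ := hxL'
          have hxH' : k * t ∈ H := hxH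
          show k * t ∈ K
          rcases key t ht with h1 | h1
          · rw [h1, mul_one]; exact hk
          · exfalso
            apply hτH
            have h3 : k⁻¹ * (k * t) ∈ H := H.mul_mem (H.inv_mem (hK2 hk)) hxH'
            rw [inv_mul_cancel_left, h1] at h3
            exact h3
        · exact le_inf hK2 le_sup_left
      have hnotle : ¬ L ≤ H := fun hle =>
        hτH (hle ((le_sup_right : Subgroup.zpowers τ ≤ L) (Subgroup.mem_zpowers τ)))
      have hrel : H.relIndex L = 2 := by
        have hdvd2 : H.relIndex L ∣ 2 := hindex ▸ Subgroup.relIndex_dvd_index_of_normal H L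
        rcases (Nat.dvd_prime Nat.prime_two).1 hdvd2 with h | h
        · exact absurd (Subgroup.relIndex_eq_one.1 h) hnotle
        · exact h
      have hsub : H.subgroupOf L = K.subgroupOf L := by
        ext x
        simp only [Subgroup.mem_subgroupOf]
        constructor
        · intro hxh
          have : (x : G) ∈ H ⊓ L := ⟨hxh, x.2⟩
          rw [hinf] at this
          exact this
        · intro hxk
          exact hK2 hxk
      have hcardsub : Nat.card (H.subgroupOf L) = m := by
        rw [hsub, ← hK3]
        exact Nat.card_congr (Subgroup.subgroupOfEquivOfLe le_sup_left).toEquiv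
      have := Subgroup.card_mul_index (H.subgroupOf L)
      rw [hcardsub] at this
      have hrel' : (H.subgroupOf L).index = H.relIndex L := rfl
      rw [hrel', hrel] at this
      rw [← this, hm2, mul_comm]
    -- choose the involution
    by_cases hcase : H₀ ≤ H
    · refine ⟨K ⊔ Subgroup.zpowers σ, hcard σ hσH (by rw [← pow_two]; exact hσ2), ?_⟩
      have : H₀ ≤ K := fun x hx => hK1 ⟨hx, hcase hx⟩
      exact this.trans le_sup_left
    · obtain ⟨τ, hτ₀, hτH⟩ := SetLike.not_le_iff_exists.1 hcase
      have hττ : τ * τ = 1 := hinvol τ hτH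
      refine ⟨K ⊔ Subgroup.zpowers τ, hcard τ hτH hττ, ?_⟩
      intro x hx
      by_cases hxH : x ∈ H
      · exact (le_sup_left : K ≤ K ⊔ Subgroup.zpowers τ) (hK1 ⟨hx, hxH⟩)
      · have hxτ : x * τ ∈ H := hout x hxH τ hτH
        have hxτK : x * τ ∈ K := hK1 ⟨H₀.mul_mem hx hτ₀, hxτ⟩
        have : (x * τ) * τ⁻¹ ∈ (K ⊔ Subgroup.zpowers τ : Subgroup G) :=
          Subgroup.mul_mem _ ((le_sup_left : K ≤ K ⊔ Subgroup.zpowers τ) hxτK)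
            (Subgroup.inv_mem _ ((le_sup_right : Subgroup.zpowers τ ≤ K ⊔ Subgroup.zpowers τ)
              (Subgroup.mem_zpowers τ)))
        rwa [mul_inv_cancel_right] at this
  · -- odd case
    have hH₀H : H₀ ≤ H := by
      intro x hx
      by_contra hxH
      have hx2 : x * x = 1 := hinvol x hxH
      have hx1 : x ≠ 1 := fun h => hxH (h ▸ H.one_mem)
      have hord : orderOf x = 2 := orderOf_eq_prime (by rw [pow_two]; exact hx2) hx1
      have h1 : orderOf (⟨x, hx⟩ : H₀) = 2 := by
        rw [← orderOf_injective H₀.subtype H₀.subtype_injective ⟨x, hx⟩]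
        exact hord
      have h2 : 2 ∣ n := (h1 ▸ orderOf_dvd_natCard (⟨x, hx⟩ : H₀)).trans hH₀dvd
      rw [Nat.odd_iff] at hno; omega
    have hnH : n ∣ Nat.card H := by
      have hcop : Nat.Coprime n 2 := by
        rw [Nat.coprime_comm, Nat.Prime.coprime_iff_not_dvd Nat.prime_two]
        rw [Nat.odd_iff] at hno; omega
      exact hcop.dvd_of_dvd_mul_left (by rw [← hcardG]; exact hndvd)
    obtain ⟨K, h1, h2, h3⟩ := hextendH H₀ hH₀H n hH₀dvd hnH
    exact ⟨K, h3, h1⟩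
end

section
/- Let Φ be a field of characteristic different from p (p prime), let Φ_p = Φ(ε_p) where ε_p is a primitive p-th root of unity, and let m = [Φ_p : Φ], which divides p−1. Let φ be a generator of Gal(Φ_p/Φ) with φ(ε_p) = ε_p^s. For 0 ≤ i ≤ m−1 define V_i = {α ∈ Φ_p* : φ(α)·α^{−s^i} ∈ Φ_p*^p}. Then the Φ_p*^p-cosets of the V_i give a direct sum decomposition: the 𝔽_p-vector space Φ_p*/Φ_p*^p is the direct sum of the subspaces V_i/Φ_p*^p for i = 0,…,m−1. -/
open Finset in
private lemma pow_eq_pow_of_modEq' {M : Type*} [Monoid M] (x : M) (m : ℕ) (hx : x ^ m = 1)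
    {u v : ℕ} (h : u ≡ v [MOD m]) : x ^ u = x ^ v := by
  wlog hle : v ≤ u generalizing u v
  · exact (this h.symm (le_of_not_ge hle)).symm
  obtain ⟨d, hd⟩ := (Nat.modEq_iff_dvd' hle).mp h.symm
  have huv : u = v + m * d := by omega
  subst huv
  rw [pow_add, pow_mul, hx, one_pow, mul_one]

open Finset in
private lemma aux_decomp {W : Type*} [CommGroup W] (p : ℕ) [Fact p.Prime]
    (hWp : ∀ a : W, a ^ p = 1)
    (m s : ℕ) (hm : m ≠ 0) (hpm : ¬ p ∣ m)
    (hσ : ∀ j : ℕ, ((s : ZMod p)) ^ j = 1 ↔ m ∣ j)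
    (Ψ : Monoid.End W) (hΨm : Ψ ^ m = 1) (q : W) :
    ∃! w : Fin m → W, (∀ i : Fin m, Ψ (w i) = (w i) ^ (s ^ (i : ℕ))) ∧ ∏ i, w i = q := by
  haveI : NeZero m := ⟨hm⟩
  have hm1 : 1 ≤ m := Nat.one_le_iff_ne_zero.mpr hm
  set σ : ZMod p := (s : ZMod p) with hσdef
  have hσm : σ ^ m = 1 := (hσ m).2 dvd_rfl
  have hmp : (m : ZMod p) ≠ 0 := by
    simpa [ZMod.natCast_eq_zero_iff] using hpm
  have hpow : ∀ (a : W) (n n' : ℕ), (n : ZMod p) = (n' : ZMod p) → a ^ n = a ^ n' := fun a n n' h =>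
    pow_eq_pow_of_modEq' a p (hWp a) ((ZMod.natCast_eq_natCast_iff _ _ _).mp h)
  have hσpow : ∀ u v : ℕ, ((u : ZMod m)) = (v : ZMod m) → σ ^ u = σ ^ v := fun u v h =>
    pow_eq_pow_of_modEq' σ m hσm ((ZMod.natCast_eq_natCast_iff _ _ _).mp h)
  have hΨpow : ∀ n n' : ℕ, ((n : ZMod m)) = (n' : ZMod m) → (Ψ : Monoid.End W) ^ n = Ψ ^ n' :=
    fun n n' h => pow_eq_pow_of_modEq' Ψ m hΨm ((ZMod.natCast_eq_natCast_iff _ _ _).mp h)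
  have happ : ∀ (n : ℕ) (a : W), (Ψ ^ (n + 1)) a = Ψ ((Ψ ^ n) a) := by
    intro n a; rw [pow_succ']; rfl
  have hval : ∀ j : ZMod m, ((j.val : ℕ) : ZMod m) = j := by
    intro j; simp [ZMod.natCast_val, ZMod.cast_id]
  have hmm1 : ((m - 1 : ℕ) : ZMod m) = -1 := by
    push_cast [Nat.cast_sub hm1]; simp
  have zsum_eq : ∀ g : ℕ → ZMod p, ∑ j : ZMod m, g j.val = ∑ j ∈ range m, g j := by
    intro g
    rw [← Fin.sum_univ_eq_sum_range]
    exact Fintype.sum_equiv ⟨fun z : ZMod m => (⟨z.val, z.val_lt⟩ : Fin m),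
      fun j => (j : ZMod m), fun z => by simp [ZMod.natCast_val, ZMod.cast_id], fun j => by
        ext; simp [ZMod.val_cast_of_lt j.isLt]⟩ _ _ fun z => rfl
  -- the inverse of m mod p
  set t : ℕ := ((m : ZMod p)⁻¹).val with htdef
  have ht : (t : ZMod p) = (m : ZMod p)⁻¹ := by
    simp [htdef, ZMod.natCast_val, ZMod.cast_id]
  -- coefficients
  set c : ℕ → ℕ → ℕ := fun k j => t * s ^ ((m - 1) * (k * j)) with hcdef
  have hc : ∀ k j : ℕ, ((c k j : ℕ) : ZMod p) = (m : ZMod p)⁻¹ * σ ^ ((m - 1) * (k * j)) := by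
    intro k j; simp [hcdef, ht, hσdef]
  -- the projections
  set T : W → ZMod m → W := fun a j => (Ψ ^ j.val) a with hTdef
  have hT1 : ∀ (a : W) (j : ZMod m), Ψ (T a j) = T a (j + 1) := by
    intro a j
    have h1 : (Ψ : Monoid.End W) ^ (j.val + 1) = Ψ ^ (j + 1).val := by
      apply hΨpow; push_cast [hval]; ring
    simp only [hTdef, ← happ, h1]
  set E : ℕ → (W →* W) := fun k =>
    { toFun := fun a => ∏ j : ZMod m, (T a j) ^ (c k j.val)
      map_one' := by simp [hTdef]
      map_mul' := by
        intro a b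
        simp only [hTdef, map_mul, mul_pow]
        rw [Finset.prod_mul_distrib] } with hEdef
  have hEapp : ∀ (k : ℕ) (a : W), E k a = ∏ j : ZMod m, (T a j) ^ (c k j.val) := fun _ _ => rfl
  -- eigen property of E k a
  have hE_eig : ∀ (k : ℕ) (a : W), Ψ (E k a) = (E k a) ^ (s ^ k) := by
    intro k a
    rw [hEapp, map_prod]
    simp only [map_pow, hT1]
    calc ∏ j : ZMod m, T a (j + 1) ^ c k j.val
        = ∏ j : ZMod m, T a j ^ c k (j - 1).val :=
          Fintype.prod_equiv (Equiv.addRight (1 : ZMod m)) _ _ fun j => by simp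
      _ = ∏ j : ZMod m, T a j ^ (c k j.val * s ^ k) := by
          refine Finset.prod_congr rfl fun j _ => hpow _ _ _ ?_
          push_cast [hc]
          rw [mul_assoc]
          congr 1
          rw [show σ ^ ((m - 1) * (k * j.val)) * σ ^ k = σ ^ ((m - 1) * (k * j.val) + k) from
            (pow_add σ _ _).symm]
          apply hσpow
          push_cast [hval, hmm1]
          ring
      _ = (∏ j : ZMod m, T a j ^ c k j.val) ^ (s ^ k) := by
          rw [← Finset.prod_pow]
          exact Finset.prod_congr rfl fun j _ => by rw [← pow_mul]
  -- the product of all projections is the identity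
  have hE_sum : ∀ a : W, ∏ k : Fin m, E (k : ℕ) a = a := by
    intro a
    simp only [hEapp]
    rw [Finset.prod_comm]
    have hNj : ∀ j : ZMod m, ((∑ k ∈ (univ : Finset (Fin m)), c (k : ℕ) j.val : ℕ) : ZMod p)
        = if j = 0 then 1 else 0 := by
      intro j
      push_cast [hc]
      have hre : ∀ k : ℕ, σ ^ ((m - 1) * (k * j.val)) = (σ ^ ((m - 1) * j.val)) ^ k := by
        intro k; rw [← pow_mul]; congr 1; ring
      simp only [hre]
      rw [← Finset.mul_sum]
      rw [Fin.sum_univ_eq_sum_range (fun k => (σ ^ ((m - 1) * j.val)) ^ k)]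
      by_cases hj : j = 0
      · subst hj
        simp only [ZMod.val_zero, Nat.mul_zero, pow_zero, one_pow]
        rw [Finset.sum_const, card_range, nsmul_eq_mul, mul_one, inv_mul_cancel₀ hmp]
        simp
      · have hx1 : σ ^ ((m - 1) * j.val) ≠ 1 := by
          intro hx1
          rw [hσdef] at hx1
          have hdvd := (hσ _).1 hx1
          have hco : Nat.Coprime m (m - 1) := by
            rcases m with _ | n
            · exact absurd rfl hm
            · simpa using Nat.coprime_succ_self_right (n := n) |>.symm
          have h2 : m ∣ j.val := hco.dvd_of_dvd_mul_left hdvd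
          have h3 : j.val = 0 := Nat.eq_zero_of_dvd_of_lt h2 j.val_lt
          exact hj (by rwa [ZMod.val_eq_zero] at h3)
        have hxm : (σ ^ ((m - 1) * j.val)) ^ m = 1 := by
          rw [← pow_mul, mul_comm, pow_mul, hσm, one_pow]
        rw [geom_sum_eq hx1, hxm]
        simp [hj]
    calc ∏ j : ZMod m, ∏ k : Fin m, T a j ^ c (k : ℕ) j.val
        = ∏ j : ZMod m, T a j ^ (∑ k ∈ (univ : Finset (Fin m)), c (k : ℕ) j.val) :=
          Finset.prod_congr rfl fun j _ => Finset.prod_pow_eq_pow_sum _ _ _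
      _ = ∏ j : ZMod m, T a j ^ (if j = 0 then 1 else 0) := by
          refine Finset.prod_congr rfl fun j _ => hpow _ _ _ ?_
          rw [hNj]; split <;> simp
      _ = a := by
          rw [Finset.prod_eq_single 0 (fun j _ hj => by simp [hj]) (by simp)]
          simp [hTdef]
  -- projections annihilate the other eigenspaces
  have hE_proj : ∀ (i k : ℕ), i < m → k < m → ∀ b : W, Ψ b = b ^ (s ^ i) →
      E k b = if k = i then b else 1 := by
    intro i k hi hk b hb
    have hTb : ∀ n : ℕ, (Ψ ^ n) b = b ^ (s ^ (i * n)) := by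
      intro n
      induction n with
      | zero => simp
      | succ n ih =>
        rw [happ, ih, map_pow, hb, ← pow_mul, ← pow_add]
        congr 1
        ring
    have hEb : E k b = b ^ (∑ j : ZMod m, s ^ (i * j.val) * c k j.val) := by
      rw [hEapp, ← Finset.prod_pow_eq_pow_sum]
      refine Finset.prod_congr rfl fun j _ => ?_
      rw [hTdef]
      simp only []
      rw [hTb, ← pow_mul]
    have hcast : ((∑ j : ZMod m, s ^ (i * j.val) * c k j.val : ℕ) : ZMod p)
        = if k = i then 1 else 0 := by
      push_cast [hc]
      rw [← hσdef]
      have hx : ∀ j : ZMod m, σ ^ (i * j.val) * ((m : ZMod p)⁻¹ * σ ^ ((m - 1) * (k * j.val))) =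
          (m : ZMod p)⁻¹ * (σ ^ (i + (m - 1) * k)) ^ j.val := by
        intro j
        rw [← pow_mul, ← mul_assoc, mul_comm (σ ^ (i * j.val)), mul_assoc, ← pow_add]
        congr 2
        ring
      simp only [hx]
      rw [← Finset.mul_sum, zsum_eq (fun n => (σ ^ (i + (m - 1) * k)) ^ n)]
      have hxm : (σ ^ (i + (m - 1) * k)) ^ m = 1 := by
        rw [← pow_mul, mul_comm, pow_mul, hσm, one_pow]
      by_cases hki : k = i
      · subst hki
        have he : k + (m - 1) * k = m * k := by
          cases m with
          | zero => exact absurd rfl hm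
          | succ n => simp only [Nat.succ_sub_one]; ring
        have hx1 : σ ^ (k + (m - 1) * k) = 1 := by
          rw [he, pow_mul, hσm, one_pow]
        rw [hx1]
        simp only [one_pow]
        rw [Finset.sum_const, card_range, nsmul_eq_mul, mul_one, inv_mul_cancel₀ hmp]
        simp
      · have hx1 : σ ^ (i + (m - 1) * k) ≠ 1 := by
          intro hx1
          rw [hσdef] at hx1
          have hdvd := (hσ _).1 hx1
          have h0 : ((i + (m - 1) * k : ℕ) : ZMod m) = 0 := by
            rw [ZMod.natCast_eq_zero_iff]; exact hdvd
          push_cast [hmm1] at h0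
          have hik : (i : ZMod m) = (k : ZMod m) := by linear_combination h0
          have h4 := congrArg ZMod.val hik
          rw [ZMod.val_cast_of_lt hi, ZMod.val_cast_of_lt hk] at h4
          exact hki h4.symm
        rw [geom_sum_eq hx1, hxm]
        simp [hki]
    rw [hEb]
    by_cases hki : k = i
    · rw [hpow b _ 1 (by rw [hcast]; simp [hki]), pow_one, if_pos hki]
    · rw [hpow b _ 0 (by rw [hcast]; simp [hki]), pow_zero, if_neg hki]
  -- conclusion
  refine ⟨fun i => E (i : ℕ) q, ⟨fun i => hE_eig (i : ℕ) q, hE_sum q⟩, ?_⟩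
  rintro w' ⟨h1, h2⟩
  funext k
  have h3 : ∀ i : Fin m, E (k : ℕ) (w' i) = if (k : ℕ) = (i : ℕ) then w' i else 1 :=
    fun i => hE_proj (i : ℕ) (k : ℕ) i.isLt k.isLt (w' i) (h1 i)
  calc w' k = ∏ i : Fin m, E (k : ℕ) (w' i) := by
        simp only [h3, Fin.val_eq_val]
        rw [Finset.prod_ite_eq]
        simp
    _ = E (k : ℕ) (∏ i, w' i) := (map_prod (E (k : ℕ)) w' univ).symm
    _ = E (k : ℕ) q := by rw [h2]

theorem stmt_14 {Φ F : Type*} [Field Φ] [Field F] [Algebra Φ F]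
    (p : ℕ) (hp : p.Prime) (hchar : ringChar Φ ≠ p)
    (ε : F) (hε : IsPrimitiveRoot ε p)
    (hFgen : IntermediateField.adjoin Φ {ε} = ⊤)  -- `F = Φ(ε_p)`
    [IsGalois Φ F] (m : ℕ) (hm : Module.finrank Φ F = m) (hmdvd : m ∣ p - 1)
    (φ : F ≃ₐ[Φ] F) (hφgen : ∀ ψ : F ≃ₐ[Φ] F, ψ ∈ Subgroup.zpowers φ)
    (s : ℕ) (hs : φ ε = ε ^ s) :
    -- the `𝔽_p`-vector space `F*/F*^p` is the (internal) direct sum of the images of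
    -- the `V i`, `i = 0, …, m-1`: every element decomposes uniquely as a product
    ∀ q : Fˣ ⧸ (powMonoidHom p : Fˣ →* Fˣ).range,
      ∃! w : Fin m → Fˣ ⧸ (powMonoidHom p : Fˣ →* Fˣ).range,
        (∀ i : Fin m, ∃ α : Fˣ, QuotientGroup.mk α = w i ∧
          ∃ γ : F, γ ≠ 0 ∧ φ (α : F) = (α : F) ^ (s ^ (i : ℕ)) * γ ^ p) ∧
        (∏ i, w i) = q := by
  intro q
  haveI : Fact p.Prime := ⟨hp⟩
  have hp2 := hp.two_le
  have hm0 : m ≠ 0 := by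
    rintro rfl
    rw [zero_dvd_iff] at hmdvd
    omega
  haveI : FiniteDimensional Φ F :=
    Module.finite_of_finrank_pos (by rw [hm]; exact Nat.pos_of_ne_zero hm0)
  have hpm : ¬ p ∣ m := by
    intro h
    have h1 : p ≤ m := Nat.le_of_dvd (Nat.pos_of_ne_zero hm0) h
    have h2 : m ≤ p - 1 := Nat.le_of_dvd (by omega) hmdvd
    omega
  have hordφ : orderOf φ = m := by
    have hcard : Nat.card (F ≃ₐ[Φ] F) = m := by
      rw [← hm, ← IsGalois.card_aut_eq_finrank Φ F]
    rw [orderOf_eq_card_of_forall_mem_zpowers hφgen, hcard]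
  have hφm : φ ^ m = 1 := by rw [← hordφ]; exact pow_orderOf_eq_one φ
  have hφj : ∀ j : ℕ, (φ ^ j) ε = ε ^ (s ^ j) := by
    intro j
    induction j with
    | zero => simp
    | succ n ih =>
      rw [pow_succ, AlgEquiv.mul_apply, hs, map_pow, ih, ← pow_mul, ← pow_succ]
  have hεinj : ∀ u v : ℕ, ε ^ u = ε ^ v → (u : ZMod p) = (v : ZMod p) := by
    intro u v h
    rw [ZMod.natCast_eq_natCast_iff]
    wlog hle : v ≤ u generalizing u v
    · exact ((this _ _ h.symm (le_of_not_ge hle))).symm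
    have hne : ε ≠ 0 := hε.ne_zero hp.ne_zero
    have h1 : ε ^ (u - v) = 1 := by
      apply mul_left_cancel₀ (pow_ne_zero v hne)
      rw [← pow_add, mul_one, Nat.add_sub_cancel' hle]
      exact h
    exact ((Nat.modEq_iff_dvd' hle).mpr ((hε.pow_eq_one_iff_dvd _).mp h1)).symm
  have hσ : ∀ j : ℕ, ((s : ZMod p)) ^ j = 1 ↔ m ∣ j := by
    intro j
    constructor
    · intro h
      have h1 : ε ^ (s ^ j) = ε := by
        have h2 := pow_eq_pow_of_modEq' ε p hε.pow_eq_one (u := s ^ j) (v := 1)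
          ((ZMod.natCast_eq_natCast_iff _ _ _).mp (by push_cast; rw [h]))
        simpa using h2
      have h2 : (φ ^ j) = 1 := by
        have hfix : (φ ^ j) ε = ε := by rw [hφj, h1]
        ext x
        have hx : x ∈ IntermediateField.adjoin Φ {ε} := hFgen ▸ IntermediateField.mem_top
        induction hx using IntermediateField.adjoin_induction with
        | mem y hy => simp at hy; subst hy; exact hfix
        | algebraMap r => exact (φ ^ j).commutes r
        | add a b _ _ ha hb => simp [map_add, ha, hb]
        | mul a b _ _ ha hb => simp [map_mul, ha, hb]
        | inv a _ ha => simp [map_inv₀, ha]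
      rw [← hordφ]
      exact orderOf_dvd_of_pow_eq_one h2
    · rintro ⟨d, rfl⟩
      have h1 : ε ^ (s ^ m) = ε ^ 1 := by rw [pow_one, ← hφj, hφm]; rfl
      have h2 := hεinj _ _ h1
      push_cast at h2
      rw [pow_mul, h2, one_pow]
  -- the quotient group and the induced endomorphism
  let φM : Fˣ →* Fˣ := Units.map (φ.toAlgHom.toRingHom.toMonoidHom)
  have hφM : ∀ α : Fˣ, ((φM α : Fˣ) : F) = φ (α : F) := fun α => rfl
  have hle : (powMonoidHom p : Fˣ →* Fˣ).range ≤
      ((powMonoidHom p : Fˣ →* Fˣ).range).comap φM := by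
    rintro x ⟨v, rfl⟩
    exact ⟨φM v, by simp [powMonoidHom_apply, map_pow]⟩
  let ψ : Monoid.End (Fˣ ⧸ (powMonoidHom p : Fˣ →* Fˣ).range) :=
    QuotientGroup.map _ _ φM hle
  have hψmk : ∀ α : Fˣ, ψ (QuotientGroup.mk α) = QuotientGroup.mk (φM α) := fun _ => rfl
  have hWp : ∀ a : Fˣ ⧸ (powMonoidHom p : Fˣ →* Fˣ).range, a ^ p = 1 := by
    intro a
    induction a using QuotientGroup.induction_on with
    | H α => exact (QuotientGroup.eq_one_iff _).mpr ⟨α, rfl⟩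
  have hψn : ∀ (n : ℕ) (α : Fˣ), (ψ ^ n) (QuotientGroup.mk α)
      = QuotientGroup.mk (Units.map ((φ ^ n).toAlgHom.toRingHom.toMonoidHom) α) := by
    intro n α
    induction n with
    | zero =>
      rw [pow_zero, pow_zero]
      congr 1
    | succ n ih =>
      have hstep : (ψ ^ (n + 1)) (QuotientGroup.mk α) = ψ ((ψ ^ n) (QuotientGroup.mk α)) := by
        rw [pow_succ']; rfl
      rw [hstep, ih, hψmk]
      congr 1
      ext
      rw [pow_succ']
      rfl
  have hΨm : ψ ^ m = 1 := by
    refine MonoidHom.ext fun a => ?_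
    induction a using QuotientGroup.induction_on with
    | H α =>
      change (ψ ^ m) (QuotientGroup.mk α) = QuotientGroup.mk α
      rw [hψn, hφm]
      congr 1
  have hmkpow : ∀ (α : Fˣ) (n : ℕ),
      ((QuotientGroup.mk (α ^ n)) : Fˣ ⧸ (powMonoidHom p : Fˣ →* Fˣ).range)
      = (QuotientGroup.mk α : Fˣ ⧸ (powMonoidHom p : Fˣ →* Fˣ).range) ^ n := by
    intro α n
    rw [← QuotientGroup.mk'_apply, ← QuotientGroup.mk'_apply, map_pow]
  have hcond : ∀ (a : Fˣ ⧸ (powMonoidHom p : Fˣ →* Fˣ).range) (n : ℕ),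
      (∃ α : Fˣ, (QuotientGroup.mk α : Fˣ ⧸ (powMonoidHom p : Fˣ →* Fˣ).range) = a ∧
        ∃ γ : F, γ ≠ 0 ∧ φ (α : F) = (α : F) ^ n * γ ^ p)
      ↔ ψ a = a ^ n := by
    intro a n
    constructor
    · rintro ⟨α, rfl, γ, hγ, hαγ⟩
      have hu : φM α = α ^ n * (Units.mk0 γ hγ) ^ p := by
        ext
        push_cast
        exact hαγ
      rw [hψmk, hu]
      have h1 : (QuotientGroup.mk (α ^ n * (Units.mk0 γ hγ) ^ p) :
          Fˣ ⧸ (powMonoidHom p : Fˣ →* Fˣ).range)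
          = QuotientGroup.mk (α ^ n) * QuotientGroup.mk ((Units.mk0 γ hγ) ^ p) := rfl
      have h5 : (QuotientGroup.mk ((Units.mk0 γ hγ) ^ p) :
          Fˣ ⧸ (powMonoidHom p : Fˣ →* Fˣ).range) = 1 :=
        (QuotientGroup.eq_one_iff _).mpr ⟨Units.mk0 γ hγ, rfl⟩
      rw [h1, h5, hmkpow]
      exact mul_one ((QuotientGroup.mk α : Fˣ ⧸ (powMonoidHom p : Fˣ →* Fˣ).range) ^ n)
    · intro h
      obtain ⟨α, rfl⟩ := QuotientGroup.mk_surjective a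
      rw [hψmk] at h
      have h2 : (QuotientGroup.mk (α ^ n) : Fˣ ⧸ (powMonoidHom p : Fˣ →* Fˣ).range)
          = QuotientGroup.mk (φM α) := by rw [hmkpow, ← h]
      rw [QuotientGroup.eq] at h2
      obtain ⟨u, hu⟩ := h2
      refine ⟨α, rfl, (u : F), u.ne_zero, ?_⟩
      have h3 : φM α = α ^ n * u ^ p := by
        rw [show (u : Fˣ) ^ p = powMonoidHom p u from rfl, hu, ← mul_assoc,
          mul_inv_cancel, one_mul]
      have h4 := congrArg (fun z : Fˣ => (z : F)) h3
      push_cast at h4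
      rw [← hφM]
      exact h4
  obtain ⟨w, hw, huniq⟩ := aux_decomp p hWp m s hm0 hpm hσ ψ hΨm q
  have hiff : ∀ w' : Fin m → Fˣ ⧸ (powMonoidHom p : Fˣ →* Fˣ).range,
      ((∀ i : Fin m, ∃ α : Fˣ, QuotientGroup.mk α = w' i ∧
          ∃ γ : F, γ ≠ 0 ∧ φ (α : F) = (α : F) ^ (s ^ (i : ℕ)) * γ ^ p) ∧ ∏ i, w' i = q)
      ↔ ((∀ i : Fin m, ψ (w' i) = (w' i) ^ (s ^ (i : ℕ))) ∧ ∏ i, w' i = q) :=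
    fun w' => and_congr_left' (forall_congr' fun i => hcond (w' i) (s ^ (i : ℕ)))
  exact ⟨w, (hiff w).mpr hw, fun y hy => huniq y ((hiff y).mp hy)⟩
end
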